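/- arXiv:2501.15556 — 3 statements merged into one kernel-verified Lean document; each statement's English description precedes it below -/
import Mathlib

section
/- Let L, L₁, …, L_K : ℝⁿ → ℝ with each L_k three times continuously differentiable and L continuously differentiable. Fix weights w₁, …, w_K with Σ_k w_k = 1, indices i ≠ j with w_i > 0 and w_j > 0, and a point x ∈ ℝⁿ. Suppose P(L_i − L_j, Σ_k w_k L_k; L)(x) ≠ 0. Then there exist δ > 0 with δ ≤ min(w_i, w_j) and ε₀ > 0 such that for all ε ∈ (0, ε₀), at least one of the two reordered trajectories strictly improves L: writing u₁ = −Σ_k w_k ∇L_k − δ(∇L_i − ∇L_j), u₂ = −Σ_k w_k ∇L_k + δ(∇L_i − ∇L_j), v = −Σ_k w_k ∇L_k, with flows Φ₁, Φ₂, Φ̄ of u₁, u₂, v, we have min( L(Φ₂(ε, Φ₁(ε, x))), L(Φ₁(ε, Φ₂(ε, x))) ) < L(Φ̄(2ε, x)). -/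
open Set Metric

variable {E : Type*} [NormedAddCommGroup E] [NormedSpace ℝ E] [ProperSpace E]

/-- Bounds for a C² vector field on `closedBall x 2`. -/
lemma field_bounds {u : E → E} (hu : ContDiff ℝ 2 u) (x : E) :
    ∃ M : ℝ, 1 ≤ M ∧ (∀ y ∈ closedBall x 2, ‖u y‖ ≤ M ∧ ‖fderiv ℝ u y‖ ≤ M) ∧
      ∀ y ∈ closedBall x 2, ∀ z ∈ closedBall x 2,
        ‖u z - u y‖ ≤ M * ‖z - y‖ ∧ ‖fderiv ℝ u z - fderiv ℝ u y‖ ≤ M * ‖z - y‖ ∧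
        ‖u z - u y - fderiv ℝ u y (z - y)‖ ≤ M * ‖z - y‖ ^ 2 := by
  have hu1 : ContDiff ℝ 1 u := hu.of_le (by norm_num)
  have hdu : ContDiff ℝ 1 (fderiv ℝ u) := hu.fderiv_right (le_refl _)
  have hddu : Continuous (fderiv ℝ (fderiv ℝ u)) := by
    have : ContDiff ℝ 0 (fderiv ℝ (fderiv ℝ u)) := hdu.fderiv_right (by norm_num)
    exact this.continuous
  obtain ⟨M₀, hM₀⟩ := (isCompact_closedBall x 2).exists_bound_of_continuousOn
    hu.continuous.continuousOn
  obtain ⟨M₁, hM₁⟩ := (isCompact_closedBall x 2).exists_bound_of_continuousOn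
    hdu.continuous.continuousOn
  obtain ⟨M₂, hM₂⟩ := (isCompact_closedBall x 2).exists_bound_of_continuousOn
    hddu.continuousOn
  set M : ℝ := max (max M₀ M₁) (max M₂ 1) with hM
  have hM1 : (1:ℝ) ≤ M := le_max_of_le_right (le_max_right _ _)
  have hMu : ∀ y ∈ closedBall x 2, ‖u y‖ ≤ M := fun y hy =>
    (hM₀ y hy).trans (le_max_of_le_left (le_max_left _ _))
  have hMdu : ∀ y ∈ closedBall x 2, ‖fderiv ℝ u y‖ ≤ M := fun y hy =>
    (hM₁ y hy).trans (le_max_of_le_left (le_max_right _ _))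
  have hMddu : ∀ y ∈ closedBall x 2, ‖fderiv ℝ (fderiv ℝ u) y‖ ≤ M := fun y hy =>
    (hM₂ y hy).trans (le_max_of_le_right (le_max_left _ _))
  refine ⟨M, hM1, fun y hy => ⟨hMu y hy, hMdu y hy⟩, fun y hy z hz => ?_⟩
  have hlip : ∀ p ∈ closedBall x 2, ∀ q ∈ closedBall x 2,
      ‖u q - u p‖ ≤ M * ‖q - p‖ := by
    intro p hp q hq
    exact (convex_closedBall x 2).norm_image_sub_le_of_norm_fderiv_le
      (fun w hw => hu1.differentiable one_ne_zero w) hMdu hp hq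
  have hliod : ∀ p ∈ closedBall x 2, ∀ q ∈ closedBall x 2,
      ‖fderiv ℝ u q - fderiv ℝ u p‖ ≤ M * ‖q - p‖ := by
    intro p hp q hq
    exact (convex_closedBall x 2).norm_image_sub_le_of_norm_fderiv_le
      (fun w hw => hdu.differentiable one_ne_zero w) hMddu hp hq
  refine ⟨hlip y hy z hz, hliod y hy z hz, ?_⟩
  -- quadratic bound via the segment
  have hseg : segment ℝ y z ⊆ closedBall x 2 := (convex_closedBall x 2).segment_subset hy hz
  have hquad := (convex_segment y z).norm_image_sub_le_of_norm_fderiv_le'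
    (f := u) (φ := fderiv ℝ u y) (C := M * ‖z - y‖)
    (fun w _ => hu1.differentiable one_ne_zero w)
    (fun w hw => by
      have h1 := hliod y hy w (hseg hw)
      have h2 : ‖w - y‖ ≤ ‖z - y‖ := by
        have := dist_add_dist_of_mem_segment hw
        have : dist y w ≤ dist y z := by linarith [dist_nonneg (x := w) (y := z)]
        simpa [dist_eq_norm, norm_sub_rev] using this
      nlinarith [norm_nonneg (w - y), norm_nonneg (z - y),
        norm_nonneg (fderiv ℝ u w - fderiv ℝ u y), hM1]
      )
    (left_mem_segment ℝ y z) (right_mem_segment ℝ y z)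
  calc ‖u z - u y - (fderiv ℝ u y) (z - y)‖ ≤ M * ‖z - y‖ * ‖z - y‖ := hquad
    _ = M * ‖z - y‖ ^ 2 := by ring


section FlowLemmas
variable [CompleteSpace E]
open intervalIntegral

lemma field_bounds' {u : E → E} (hu : ContDiff ℝ 2 u) (x : E) :
    ∃ M : ℝ, 1 ≤ M ∧ (∀ y ∈ closedBall x 2, ‖u y‖ ≤ M ∧ ‖fderiv ℝ u y‖ ≤ M) ∧
      ∀ y ∈ closedBall x 2, ∀ z ∈ closedBall x 2,
        ‖u z - u y‖ ≤ M * ‖z - y‖ ∧ ‖fderiv ℝ u z - fderiv ℝ u y‖ ≤ M * ‖z - y‖ ∧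
        ‖u z - u y - fderiv ℝ u y (z - y)‖ ≤ M * ‖z - y‖ ^ 2 := field_bounds hu x

/-- Second-order Taylor expansion of a flow, uniform over starting points in a ball. -/
lemma flow_taylor {u : E → E} (hu : ContDiff ℝ 2 u)
    {Φ : ℝ → E → E} (hΦ0 : ∀ y, Φ 0 y = y)
    {r : ℝ} (hr : 0 < r)
    (hΦ : ∀ y, ∀ t : ℝ, |t| < r → HasDerivAt (fun s => Φ s y) (u (Φ t y)) t)
    (x : E) :
    ∃ C : ℝ, 1 ≤ C ∧ ∃ ρ > (0:ℝ), ρ < r ∧ ∀ y ∈ closedBall x 1, ∀ t ∈ Icc (0:ℝ) ρ,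
      ‖Φ t y - y‖ ≤ C * t ∧
      ‖Φ t y - (y + t • u y + (t ^ 2 / 2) • (fderiv ℝ u y (u y)))‖ ≤ C * t ^ 3 := by
  obtain ⟨M, hM1, hMbd, hMlip⟩ := field_bounds' hu x
  have hM0 : (0:ℝ) < M := lt_of_lt_of_le one_pos hM1
  set ρ : ℝ := min (r / 2) (1 / (2 * M)) with hρdef
  have hρ0 : 0 < ρ := lt_min (by linarith) (by positivity)
  have hρr : ρ < r := lt_of_le_of_lt (min_le_left _ _) (by linarith)
  have hρM : M * ρ ≤ 1 / 2 := by
    have h : ρ ≤ 1 / (2 * M) := min_le_right _ _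
    calc M * ρ ≤ M * (1 / (2 * M)) := by nlinarith
      _ = 1 / 2 := by rw [mul_one_div, div_eq_iff (by positivity : (2:ℝ) * M ≠ 0)]; ring
  -- Step 1: confinement
  have conf : ∀ y ∈ closedBall x 1, ∀ t ∈ Icc (0:ℝ) ρ, ‖Φ t y - y‖ ≤ M * t := by
    intro y hy
    have hyx : ‖y - x‖ ≤ 1 := by simpa [dist_eq_norm] using hy
    have hcont : ∀ s : ℝ, |s| < r → ContinuousAt (fun s => Φ s y) s := fun s hs =>
      (hΦ y s hs).continuousAt
    set S : Set ℝ := {t | t ∈ Icc (0:ℝ) ρ ∧ ‖Φ t y - y‖ ≤ M * t} with hS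
    have hball : ∀ t, t ∈ S → Φ t y ∈ closedBall x (3/2) := by
      rintro t ⟨⟨ht0, htρ⟩, hle⟩
      have h3 : M * t ≤ 1/2 := le_trans (by nlinarith) hρM
      have htri := dist_triangle (Φ t y) y x
      rw [dist_eq_norm, dist_eq_norm, dist_eq_norm] at htri
      rw [mem_closedBall_iff_norm]
      linarith
    have key : Icc (0:ℝ) ρ ⊆ S := by
      apply IsClosed.Icc_subset_of_forall_exists_gt (a := 0) (b := ρ)
      · have h1 : S ∩ Icc 0 ρ = (Icc 0 ρ) ∩ (fun t => ‖Φ t y - y‖ - M * t) ⁻¹' (Iic 0) := by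
          ext t
          simp only [hS, mem_inter_iff, mem_setOf_eq, mem_preimage, mem_Iic]
          constructor
          · rintro ⟨⟨h1, h2⟩, h3⟩; exact ⟨h1, by linarith⟩
          · rintro ⟨h1, h2⟩; exact ⟨⟨h1, by linarith⟩, h1⟩
        rw [h1]
        apply ContinuousOn.preimage_isClosed_of_isClosed _ isClosed_Icc isClosed_Iic
        apply ContinuousOn.sub
        · apply ContinuousOn.norm
          apply ContinuousOn.sub _ continuousOn_const
          intro s hs
          exact (hcont s (abs_lt.2 ⟨by linarith [hs.1], lt_of_le_of_lt hs.2 hρr⟩)).continuousWithinAt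
        · exact continuousOn_const.mul continuousOn_id
      · exact ⟨⟨le_refl 0, le_of_lt hρ0⟩, by simp [hΦ0]⟩
      · rintro t ⟨htS, ht0, htρ⟩ t' ht'
        have hΦt := hball t htS
        -- continuity at t gives a small interval where Φ stays in closedBall x 2
        have hct : ContinuousAt (fun s => Φ s y) t :=
          hcont t (abs_lt.2 ⟨by linarith, lt_trans htρ hρr⟩)
        rcases Metric.continuousAt_iff.mp hct (1/2) (by norm_num) with ⟨η, hη0, hηball⟩
        set t₂ : ℝ := min (min t' ρ) (t + η/2) with ht₂def
        have ht₂gt : t < t₂ := lt_min (lt_min ht' htρ) (by linarith)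
        have ht₂ρ : t₂ ≤ ρ := le_trans (min_le_left _ _) (min_le_right _ _)
        have ht₂η : t₂ ≤ t + η/2 := min_le_right _ _
        have hsub : ∀ s ∈ Icc t t₂, Φ s y ∈ closedBall x 2 := by
          intro s hs
          have hds : dist s t < η := by
            rw [Real.dist_eq, abs_lt]
            constructor <;> [linarith [hs.1]; linarith [hs.2]]
          have h1 := hηball hds
          rw [dist_eq_norm] at h1
          have h2 := mem_closedBall_iff_norm.mp hΦt
          have htri := dist_triangle (Φ s y) (Φ t y) x
          rw [dist_eq_norm, dist_eq_norm, dist_eq_norm] at htri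
          rw [mem_closedBall_iff_norm]
          linarith
        -- derivative bound on [t, t₂]
        have hderiv : ∀ s ∈ Icc t t₂, HasDerivWithinAt (fun s => Φ s y) (u (Φ s y)) (Icc t t₂) s := by
          intro s hs
          exact (hΦ y s (abs_lt.2 ⟨by linarith [hs.1, htS.1.1],
            lt_of_le_of_lt (le_trans hs.2 ht₂ρ) hρr⟩)).hasDerivWithinAt
        have hbd : ∀ s ∈ Icc t t₂, ‖u (Φ s y)‖ ≤ M := fun s hs => (hMbd _ (hsub s hs)).1
        have hlipt := (convex_Icc t t₂).norm_image_sub_le_of_norm_hasDerivWithin_le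
          hderiv hbd (left_mem_Icc.2 (le_of_lt ht₂gt)) (right_mem_Icc.2 (le_of_lt ht₂gt))
        refine ⟨t₂, ⟨⟨?_, ?_⟩, ?_⟩, ht₂gt, le_trans (min_le_left _ _) (min_le_left _ _)⟩
        · linarith [htS.1.1]
        · exact ht₂ρ
        · have h1 : ‖Φ t₂ y - Φ t y‖ ≤ M * (t₂ - t) := by
            have : ‖t₂ - t‖ = t₂ - t := by rw [Real.norm_eq_abs, abs_of_nonneg]; linarith
            calc ‖Φ t₂ y - Φ t y‖ ≤ M * ‖t₂ - t‖ := hlipt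
              _ = M * (t₂ - t) := by rw [this]
          calc ‖Φ t₂ y - y‖ ≤ ‖Φ t₂ y - Φ t y‖ + ‖Φ t y - y‖ := norm_sub_le_norm_sub_add_norm_sub _ _ _
            _ ≤ M * (t₂ - t) + M * t := by linarith [htS.2]
            _ = M * t₂ := by ring
    intro t ht
    exact (key ht).2
  refine ⟨M ^ 3, by calc (1:ℝ) = 1^3 := by norm_num
    _ ≤ M^3 := pow_le_pow_left₀ (by norm_num) hM1 3, ρ, hρ0, hρr, ?_⟩
  intro y hy t ht
  have hyx : ‖y - x‖ ≤ 1 := by simpa [dist_eq_norm] using hy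
  have hy2 : y ∈ closedBall x 2 := closedBall_subset_closedBall (by norm_num) hy
  have hmem : ∀ s ∈ Icc (0:ℝ) ρ, Φ s y ∈ closedBall x 2 := by
    intro s hs
    have h1 := conf y hy s hs
    have h2 : M * s ≤ 1/2 := le_trans (by nlinarith [hs.1, hs.2]) hρM
    have htri := dist_triangle (Φ s y) y x
    rw [dist_eq_norm, dist_eq_norm, dist_eq_norm] at htri
    rw [mem_closedBall_iff_norm]
    linarith
  have habs : ∀ s ∈ Icc (0:ℝ) ρ, |s| < r := by
    intro s hs
    rw [abs_lt]
    exact ⟨by linarith [hs.1], lt_of_le_of_lt hs.2 hρr⟩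
  have hderiv : ∀ s ∈ Icc (0:ℝ) ρ, HasDerivAt (fun s' => Φ s' y) (u (Φ s y)) s :=
    fun s hs => hΦ y s (habs s hs)
  have hcont2 : ContinuousOn (fun s => u (Φ s y)) (Icc (0:ℝ) ρ) := by
    intro s hs
    exact (hu.continuous.continuousAt.comp (hderiv s hs).continuousAt).continuousWithinAt
  have hFTC : ∀ t' ∈ Icc (0:ℝ) ρ, Φ t' y - y = ∫ s in (0:ℝ)..t', u (Φ s y) := by
    intro t' ht'
    have h1 : uIcc (0:ℝ) t' ⊆ Icc 0 ρ := by
      rw [uIcc_of_le ht'.1]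
      exact Icc_subset_Icc le_rfl ht'.2
    have := intervalIntegral.integral_eq_sub_of_hasDerivAt
      (f := fun s' => Φ s' y) (f' := fun s => u (Φ s y))
      (fun s hs => hderiv s (h1 hs))
      ((hcont2.mono h1).intervalIntegrable)
    rw [this, hΦ0]
  -- claim A
  have hA : ∀ s ∈ Icc (0:ℝ) ρ, ‖u (Φ s y) - u y‖ ≤ M^2 * s := by
    intro s hs
    have h1 := (hMlip y hy2 (Φ s y) (hmem s hs)).1
    have h2 := conf y hy s hs
    calc ‖u (Φ s y) - u y‖ ≤ M * ‖Φ s y - y‖ := h1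
      _ ≤ M * (M * s) := by nlinarith
      _ = M^2 * s := by ring
  -- claim B
  have hB : ∀ s ∈ Icc (0:ℝ) ρ, ‖Φ s y - y - s • u y‖ ≤ M^2 * s^2 / 2 := by
    intro s hs
    have h1 : uIcc (0:ℝ) s ⊆ Icc 0 ρ := by
      rw [uIcc_of_le hs.1]; exact Icc_subset_Icc le_rfl hs.2
    have hint1 : IntervalIntegrable (fun τ => u (Φ τ y)) MeasureTheory.volume 0 s :=
      (hcont2.mono h1).intervalIntegrable
    have heq : Φ s y - y - s • u y = ∫ τ in (0:ℝ)..s, (u (Φ τ y) - u y) := by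
      rw [intervalIntegral.integral_sub hint1 intervalIntegrable_const,
        intervalIntegral.integral_const, ← hFTC s hs]
      simp
    rw [heq]
    calc ‖∫ τ in (0:ℝ)..s, (u (Φ τ y) - u y)‖
        ≤ ∫ τ in (0:ℝ)..s, ‖u (Φ τ y) - u y‖ :=
          intervalIntegral.norm_integral_le_integral_norm hs.1
      _ ≤ ∫ τ in (0:ℝ)..s, M^2 * τ := by
          apply intervalIntegral.integral_mono_on hs.1
          · exact ((hcont2.mono h1).sub continuousOn_const).norm.intervalIntegrable
          · exact (continuousOn_const.mul continuousOn_id).intervalIntegrable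
          · intro τ hτ
            exact hA τ ⟨hτ.1, le_trans hτ.2 hs.2⟩
      _ = M^2 * (s^2 / 2) := by
          rw [intervalIntegral.integral_const_mul, integral_id]
          ring
      _ = M^2 * s^2 / 2 := by ring
  -- claim C
  have hC : ∀ s ∈ Icc (0:ℝ) ρ,
      ‖u (Φ s y) - u y - s • (fderiv ℝ u y (u y))‖ ≤ (3/2) * M^3 * s^2 := by
    intro s hs
    have h1 := (hMlip y hy2 (Φ s y) (hmem s hs)).2.2
    have h2 := hB s hs
    have h3 := conf y hy s hs
    have hdb := (hMbd y hy2).2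
    have key : u (Φ s y) - u y - s • (fderiv ℝ u y (u y)) =
        (u (Φ s y) - u y - fderiv ℝ u y (Φ s y - y))
          + fderiv ℝ u y (Φ s y - y - s • u y) := by
      simp only [map_sub, map_smul]
      abel
    rw [key]
    have h4 : ‖fderiv ℝ u y (Φ s y - y - s • u y)‖ ≤ M * (M^2 * s^2 / 2) := by
      calc ‖fderiv ℝ u y (Φ s y - y - s • u y)‖
          ≤ ‖fderiv ℝ u y‖ * ‖Φ s y - y - s • u y‖ := (fderiv ℝ u y).le_opNorm _
        _ ≤ M * (M^2 * s^2 / 2) := by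
            apply mul_le_mul hdb h2 (norm_nonneg _) (by positivity)
    have h5 : ‖u (Φ s y) - u y - fderiv ℝ u y (Φ s y - y)‖ ≤ M * (M * s)^2 := by
      calc ‖u (Φ s y) - u y - fderiv ℝ u y (Φ s y - y)‖ ≤ M * ‖Φ s y - y‖^2 := h1
        _ ≤ M * (M * s)^2 := by
            apply mul_le_mul_of_nonneg_left _ (le_of_lt hM0)
            exact pow_le_pow_left₀ (norm_nonneg _) h3 2
    calc ‖(u (Φ s y) - u y - fderiv ℝ u y (Φ s y - y))
          + fderiv ℝ u y (Φ s y - y - s • u y)‖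
        ≤ ‖u (Φ s y) - u y - fderiv ℝ u y (Φ s y - y)‖
          + ‖fderiv ℝ u y (Φ s y - y - s • u y)‖ := norm_add_le _ _
      _ ≤ M * (M * s)^2 + M * (M^2 * s^2 / 2) := by linarith
      _ = (3/2) * M^3 * s^2 := by ring
  -- conclusion
  have hM3 : M ≤ M ^ 3 := by nlinarith [sq_nonneg (M - 1), hM0, hM1]
  refine ⟨le_trans (conf y hy t ht) (mul_le_mul_of_nonneg_right hM3 ht.1), ?_⟩
  have h1 : uIcc (0:ℝ) t ⊆ Icc 0 ρ := by
    rw [uIcc_of_le ht.1]; exact Icc_subset_Icc le_rfl ht.2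
  have hint1 : IntervalIntegrable (fun τ => u (Φ τ y)) MeasureTheory.volume 0 t :=
    (hcont2.mono h1).intervalIntegrable
  have heq : Φ t y - (y + t • u y + (t ^ 2 / 2) • (fderiv ℝ u y (u y))) =
      ∫ s in (0:ℝ)..t, (u (Φ s y) - u y - s • (fderiv ℝ u y (u y))) := by
    have hint2 : IntervalIntegrable (fun s : ℝ => u y) MeasureTheory.volume 0 t :=
      intervalIntegrable_const
    have hint3 : IntervalIntegrable (fun s : ℝ => s • (fderiv ℝ u y (u y)))
        MeasureTheory.volume 0 t := (continuousOn_id.smul continuousOn_const).intervalIntegrable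
    rw [intervalIntegral.integral_sub (hint1.sub hint2) hint3,
      intervalIntegral.integral_sub hint1 hint2,
      intervalIntegral.integral_const, ← hFTC t ht,
      intervalIntegral.integral_smul_const, integral_id]
    simp only [sub_zero, zero_pow, ne_eq, OfNat.ofNat_ne_zero, not_false_eq_true]
    module
  rw [heq]
  calc ‖∫ s in (0:ℝ)..t, (u (Φ s y) - u y - s • (fderiv ℝ u y (u y)))‖
      ≤ ∫ s in (0:ℝ)..t, ‖u (Φ s y) - u y - s • (fderiv ℝ u y (u y))‖ :=
        intervalIntegral.norm_integral_le_integral_norm ht.1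
    _ ≤ ∫ s in (0:ℝ)..t, (3/2) * M^3 * s^2 := by
        apply intervalIntegral.integral_mono_on ht.1
        · apply ContinuousOn.intervalIntegrable
          apply ContinuousOn.norm
          exact ((hcont2.mono h1).sub continuousOn_const).sub
            (continuousOn_id.smul continuousOn_const)
        · exact (continuousOn_const.mul (continuousOn_pow 2)).intervalIntegrable
        · intro s hsIcc
          exact hC s ⟨hsIcc.1, le_trans hsIcc.2 ht.2⟩
    _ = (3/2) * M^3 * (t^3 / 3) := by
        rw [intervalIntegral.integral_const_mul, integral_pow]
        norm_num
    _ ≤ M^3 * t^3 := by nlinarith [pow_nonneg ht.1 3, pow_pos hM0 3]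

/-- Second-order expansion of the composition of two flows. -/
lemma comp_taylor {f g : E → E} (hf : ContDiff ℝ 2 f) (hg : ContDiff ℝ 2 g)
    {Φf Φg : ℝ → E → E} (hf0 : ∀ y, Φf 0 y = y) (hg0 : ∀ y, Φg 0 y = y)
    {rf rg : ℝ} (hrf : 0 < rf) (hrg : 0 < rg)
    (hΦf : ∀ y, ∀ t : ℝ, |t| < rf → HasDerivAt (fun s => Φf s y) (f (Φf t y)) t)
    (hΦg : ∀ y, ∀ t : ℝ, |t| < rg → HasDerivAt (fun s => Φg s y) (g (Φg t y)) t)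
    (x : E) :
    ∃ C : ℝ, 0 < C ∧ ∃ ρ > (0:ℝ), ∀ ε ∈ Icc (0:ℝ) ρ,
      ‖Φg ε (Φf ε x) - (x + ε • (f x + g x)
        + (ε^2) • ((1/2 : ℝ) • (fderiv ℝ f x (f x)) + fderiv ℝ g x (f x)
          + (1/2 : ℝ) • (fderiv ℝ g x (g x))))‖ ≤ C * ε^3
      ∧ ‖Φg ε (Φf ε x) - x‖ ≤ C * ε := by
  obtain ⟨Cf, hCf1, ρf, hρf0, _, Hf⟩ := flow_taylor hf hf0 hrf hΦf x
  obtain ⟨Cg, hCg1, ρg, hρg0, _, Hg⟩ := flow_taylor hg hg0 hrg hΦg x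
  obtain ⟨Mg, hMg1, hMgbd, hMglip⟩ := field_bounds' hg x
  have hCf0 : (0:ℝ) < Cf := lt_of_lt_of_le one_pos hCf1
  have hCg0 : (0:ℝ) < Cg := lt_of_lt_of_le one_pos hCg1
  have hMg0 : (0:ℝ) < Mg := lt_of_lt_of_le one_pos hMg1
  set ND : ℝ := ‖fderiv ℝ f x (f x)‖ with hND
  set C : ℝ := Cg + Cf + Mg * Cf^2 + Mg * Cf + Mg * ND / 2 + Mg^2 * Cf + 1 with hC
  have hC0 : 0 < C := by positivity
  set ρ : ℝ := min (min ρf ρg) (min 1 (1 / Cf)) with hρdef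
  have hρ0 : 0 < ρ := lt_min (lt_min hρf0 hρg0) (lt_min one_pos (by positivity))
  refine ⟨C, hC0, ρ, hρ0, ?_⟩
  rintro ε ⟨hε0, hερ⟩
  have hερf : ε ≤ ρf := le_trans hερ (le_trans (min_le_left _ _) (min_le_left _ _))
  have hερg : ε ≤ ρg := le_trans hερ (le_trans (min_le_left _ _) (min_le_right _ _))
  have hε1 : ε ≤ 1 := le_trans hερ (le_trans (min_le_right _ _) (min_le_left _ _))
  have hεCf : Cf * ε ≤ 1 := by
    have h := le_trans hερ (le_trans (min_le_right _ _) (min_le_right _ _))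
    calc Cf * ε ≤ Cf * (1 / Cf) := by nlinarith
      _ = 1 := by field_simp
  have hxball : x ∈ closedBall x 1 := mem_closedBall_self (by norm_num)
  obtain ⟨hyx1, hyx3⟩ := Hf x hxball ε ⟨hε0, hερf⟩
  set y : E := Φf ε x with hydef
  have hy1 : y ∈ closedBall x 1 := by
    rw [mem_closedBall_iff_norm]
    calc ‖y - x‖ ≤ Cf * ε := hyx1
      _ ≤ 1 := hεCf
  have hy2 : y ∈ closedBall x 2 := closedBall_subset_closedBall (by norm_num) hy1
  have hx2 : x ∈ closedBall x 2 := mem_closedBall_self (by norm_num)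
  obtain ⟨hP1, hP3⟩ := Hg y hy1 ε ⟨hε0, hερg⟩
  set P : E := Φg ε y with hPdef
  -- error terms
  set A1 : E := P - (y + ε • g y + (ε ^ 2 / 2) • (fderiv ℝ g y (g y))) with hA1
  set e2 : E := y - (x + ε • f x + (ε ^ 2 / 2) • (fderiv ℝ f x (f x))) with he2
  set A3 : E := g y - g x - fderiv ℝ g x (y - x) with hA3
  set A5 : E := fderiv ℝ g y (g y) - fderiv ℝ g x (g x) with hA5
  have key : P - (x + ε • (f x + g x)
      + (ε^2) • ((1/2 : ℝ) • (fderiv ℝ f x (f x)) + fderiv ℝ g x (f x)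
        + (1/2 : ℝ) • (fderiv ℝ g x (g x))))
      = A1 + e2 + ε • A3 + ε • (fderiv ℝ g x e2)
        + (ε^3/2) • (fderiv ℝ g x (fderiv ℝ f x (f x))) + (ε^2/2) • A5 := by
    simp only [hA1, he2, hA3, hA5, map_sub, map_add, map_smul]
    module
  -- bounds
  have hb1 : ‖A1‖ ≤ Cg * ε^3 := hP3
  have hb2 : ‖e2‖ ≤ Cf * ε^3 := hyx3
  have hb3 : ‖A3‖ ≤ Mg * (Cf * ε)^2 := by
    have h := (hMglip x hx2 y hy2).2.2
    calc ‖A3‖ ≤ Mg * ‖y - x‖^2 := h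
      _ ≤ Mg * (Cf * ε)^2 := by
          apply mul_le_mul_of_nonneg_left _ (le_of_lt hMg0)
          exact pow_le_pow_left₀ (norm_nonneg _) hyx1 2
  have hDgx : ‖fderiv ℝ g x‖ ≤ Mg := (hMgbd x hx2).2
  have hb4 : ‖fderiv ℝ g x e2‖ ≤ Mg * (Cf * ε^3) := by
    calc ‖fderiv ℝ g x e2‖ ≤ ‖fderiv ℝ g x‖ * ‖e2‖ := (fderiv ℝ g x).le_opNorm _
      _ ≤ Mg * (Cf * ε^3) := mul_le_mul hDgx hb2 (norm_nonneg _) (le_of_lt hMg0)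
  have hb5 : ‖fderiv ℝ g x (fderiv ℝ f x (f x))‖ ≤ Mg * ND := by
    calc ‖fderiv ℝ g x (fderiv ℝ f x (f x))‖ ≤ ‖fderiv ℝ g x‖ * ND := (fderiv ℝ g x).le_opNorm _
      _ ≤ Mg * ND := mul_le_mul_of_nonneg_right hDgx (norm_nonneg _)
  have hb6 : ‖A5‖ ≤ 2 * Mg^2 * (Cf * ε) := by
    have hgy : ‖g y - g x‖ ≤ Mg * ‖y - x‖ := (hMglip x hx2 y hy2).1
    have hdgy : ‖fderiv ℝ g y - fderiv ℝ g x‖ ≤ Mg * ‖y - x‖ := (hMglip x hx2 y hy2).2.1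
    have hgx : ‖g x‖ ≤ Mg := (hMgbd x hx2).1
    have hdgyb : ‖fderiv ℝ g y‖ ≤ Mg := (hMgbd y hy2).2
    have split : A5 = fderiv ℝ g y (g y - g x) + (fderiv ℝ g y - fderiv ℝ g x) (g x) := by
      simp only [hA5, map_sub, ContinuousLinearMap.sub_apply]
      abel
    rw [split]
    have t1 : ‖fderiv ℝ g y (g y - g x)‖ ≤ Mg * (Mg * ‖y - x‖) := by
      calc ‖fderiv ℝ g y (g y - g x)‖ ≤ ‖fderiv ℝ g y‖ * ‖g y - g x‖ :=
            (fderiv ℝ g y).le_opNorm _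
        _ ≤ Mg * (Mg * ‖y - x‖) := by
            apply mul_le_mul hdgyb hgy (norm_nonneg _) (le_of_lt hMg0)
    have t2 : ‖(fderiv ℝ g y - fderiv ℝ g x) (g x)‖ ≤ Mg * ‖y - x‖ * Mg := by
      calc ‖(fderiv ℝ g y - fderiv ℝ g x) (g x)‖
          ≤ ‖fderiv ℝ g y - fderiv ℝ g x‖ * ‖g x‖ := (fderiv ℝ g y - fderiv ℝ g x).le_opNorm _
        _ ≤ Mg * ‖y - x‖ * Mg := by
            apply mul_le_mul hdgy hgx (norm_nonneg _)
            positivity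
    have hyb : ‖y - x‖ ≤ Cf * ε := hyx1
    calc ‖fderiv ℝ g y (g y - g x) + (fderiv ℝ g y - fderiv ℝ g x) (g x)‖
        ≤ ‖fderiv ℝ g y (g y - g x)‖ + ‖(fderiv ℝ g y - fderiv ℝ g x) (g x)‖ := norm_add_le _ _
      _ ≤ Mg * (Mg * ‖y - x‖) + Mg * ‖y - x‖ * Mg := by linarith
      _ = 2 * Mg^2 * ‖y - x‖ := by ring
      _ ≤ 2 * Mg^2 * (Cf * ε) := mul_le_mul_of_nonneg_left hyb (by positivity)
  constructor
  · rw [key]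
    have chain := norm_add_le (A1 + e2 + ε • A3 + ε • (fderiv ℝ g x e2)
        + (ε^3/2) • (fderiv ℝ g x (fderiv ℝ f x (f x)))) ((ε^2/2) • A5)
    have c2 := norm_add_le (A1 + e2 + ε • A3 + ε • (fderiv ℝ g x e2))
        ((ε^3/2) • (fderiv ℝ g x (fderiv ℝ f x (f x))))
    have c3 := norm_add_le (A1 + e2 + ε • A3) (ε • (fderiv ℝ g x e2))
    have c4 := norm_add_le (A1 + e2) (ε • A3)
    have c5 := norm_add_le A1 e2
    have hsm : ∀ (c : ℝ) (v : E), 0 ≤ c → ‖c • v‖ = c * ‖v‖ := by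
      intro c v hc; rw [norm_smul, Real.norm_eq_abs, abs_of_nonneg hc]
    have n3 : ‖ε • A3‖ = ε * ‖A3‖ := hsm ε A3 hε0
    have n4 : ‖ε • (fderiv ℝ g x) e2‖ = ε * ‖(fderiv ℝ g x) e2‖ := hsm ε _ hε0
    have n5 : ‖(ε^3/2) • (fderiv ℝ g x) ((fderiv ℝ f x) (f x))‖
        = (ε^3/2) * ‖(fderiv ℝ g x) ((fderiv ℝ f x) (f x))‖ := hsm _ _ (by positivity)
    have n6 : ‖(ε^2/2) • A5‖ = (ε^2/2) * ‖A5‖ := hsm _ _ (by positivity)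
    -- combine
    have final : ‖A1‖ + ‖e2‖ + ε * ‖A3‖ + ε * ‖fderiv ℝ g x e2‖
        + (ε^3/2) * ‖fderiv ℝ g x (fderiv ℝ f x (f x))‖ + (ε^2/2) * ‖A5‖ ≤ C * ε^3 := by
      have i3 : ε * ‖A3‖ ≤ Mg * Cf^2 * ε^3 := by
        calc ε * ‖A3‖ ≤ ε * (Mg * (Cf * ε)^2) := mul_le_mul_of_nonneg_left hb3 hε0
          _ = Mg * Cf^2 * ε^3 := by ring
      have i4 : ε * ‖fderiv ℝ g x e2‖ ≤ Mg * Cf * ε^3 := by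
        calc ε * ‖fderiv ℝ g x e2‖ ≤ ε * (Mg * (Cf * ε^3)) := mul_le_mul_of_nonneg_left hb4 hε0
          _ = Mg * Cf * ε^4 := by ring
          _ ≤ Mg * Cf * ε^3 := by
              apply mul_le_mul_of_nonneg_left _ (by positivity)
              exact pow_le_pow_of_le_one hε0 hε1 (by norm_num)
      have i5 : (ε^3/2) * ‖fderiv ℝ g x (fderiv ℝ f x (f x))‖ ≤ (Mg * ND / 2) * ε^3 := by
        calc (ε^3/2) * ‖fderiv ℝ g x (fderiv ℝ f x (f x))‖
            ≤ (ε^3/2) * (Mg * ND) := mul_le_mul_of_nonneg_left hb5 (by positivity)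
          _ = (Mg * ND / 2) * ε^3 := by ring
      have i6 : (ε^2/2) * ‖A5‖ ≤ Mg^2 * Cf * ε^3 := by
        calc (ε^2/2) * ‖A5‖ ≤ (ε^2/2) * (2 * Mg^2 * (Cf * ε)) :=
              mul_le_mul_of_nonneg_left hb6 (by positivity)
          _ = Mg^2 * Cf * ε^3 := by ring
      have expand : C * ε^3 = Cg*ε^3 + Cf*ε^3 + Mg*Cf^2*ε^3 + Mg*Cf*ε^3
          + (Mg*ND/2)*ε^3 + Mg^2*Cf*ε^3 + ε^3 := by rw [hC]; ring
      have hb1' : ‖A1‖ ≤ Cg * ε^3 := hb1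
      have hb2' : ‖e2‖ ≤ Cf * ε^3 := hb2
      rw [expand]
      linarith [pow_nonneg hε0 3]
    linarith [chain, c2, c3, c4, c5, n3, n4, n5, n6]
  · have h1 : ‖P - y‖ ≤ Cg * ε := hP1
    calc ‖P - x‖ ≤ ‖P - y‖ + ‖y - x‖ := norm_sub_le_norm_sub_add_norm_sub _ _ _
      _ ≤ Cg * ε + Cf * ε := by linarith
      _ = (Cg + Cf) * ε := by ring
      _ ≤ C * ε := by
          apply mul_le_mul_of_nonneg_right _ hε0
          rw [hC]
          have hND0 : 0 ≤ ND := norm_nonneg _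
          have p1 : (0:ℝ) ≤ Mg * Cf^2 := by positivity
          have p2 : (0:ℝ) ≤ Mg * Cf := by positivity
          have p3 : (0:ℝ) ≤ Mg * ND / 2 := by positivity
          have p4 : (0:ℝ) ≤ Mg^2 * Cf := by positivity
          linarith

open Filter in
/-- If two curves agree to first order but differ at second order in a direction where `L`
strictly decreases, then `L` along the first is eventually smaller. -/
lemma endgame {L : E → ℝ} (hL : ContDiff ℝ 1 L) (x : E) (p q : ℝ → E)
    (b cp cq : E) {Cp Cq ρp ρq : ℝ} (hCp : 0 < Cp) (hCq : 0 < Cq)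
    (hρp : 0 < ρp) (hρq : 0 < ρq)
    (hp : ∀ ε ∈ Icc (0:ℝ) ρp, ‖p ε - (x + ε • b + ε^2 • cp)‖ ≤ Cp * ε^3 ∧ ‖p ε - x‖ ≤ Cp * ε)
    (hq : ∀ ε ∈ Icc (0:ℝ) ρq, ‖q ε - (x + ε • b + ε^2 • cq)‖ ≤ Cq * ε^3 ∧ ‖q ε - x‖ ≤ Cq * ε)
    (hneg : fderiv ℝ L x (cp - cq) < 0) :
    ∃ ε₀ > (0:ℝ), ∀ ε : ℝ, 0 < ε → ε < ε₀ → L (p ε) < L (q ε) := by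
  set φ := fderiv ℝ L x with hφ
  set S : ℝ := φ (cp - cq) with hS
  have hS0 : S < 0 := hneg
  set η : ℝ := (-S) / (2 * (‖cp - cq‖ + 1)) with hη
  have hη0 : 0 < η := by
    apply div_pos (by linarith)
    positivity
  have hstrict : HasStrictFDerivAt L φ x := (hL.contDiffAt).hasStrictFDerivAt one_ne_zero
  have hev := (hstrict.isLittleO).def hη0
  rw [Metric.eventually_nhds_iff] at hev
  obtain ⟨ζ, hζ0, hball⟩ := hev
  set B : ℝ := ‖φ‖ * (Cp + Cq) + η * (Cp + Cq) with hB
  have hB0 : 0 ≤ B := by positivity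
  set Cm : ℝ := max Cp Cq with hCm
  have hCm0 : 0 < Cm := lt_max_of_lt_left hCp
  refine ⟨min (min ρp ρq) (min (ζ / (2 * Cm)) ((-S/2) / (B + 1))), ?_, ?_⟩
  · apply lt_min (lt_min hρp hρq)
    apply lt_min (by positivity)
    apply div_pos (by linarith)
    linarith
  intro ε hε0 hεlt
  have hερp : ε ≤ ρp := le_of_lt (lt_of_lt_of_le hεlt (le_trans (min_le_left _ _) (min_le_left _ _)))
  have hερq : ε ≤ ρq := le_of_lt (lt_of_lt_of_le hεlt (le_trans (min_le_left _ _) (min_le_right _ _)))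
  have hεζ : ε < ζ / (2 * Cm) :=
    lt_of_lt_of_le hεlt (le_trans (min_le_right _ _) (min_le_left _ _))
  have hεS : ε < (-S/2) / (B + 1) :=
    lt_of_lt_of_le hεlt (le_trans (min_le_right _ _) (min_le_right _ _))
  obtain ⟨hp3, hp1⟩ := hp ε ⟨le_of_lt hε0, hερp⟩
  obtain ⟨hq3, hq1⟩ := hq ε ⟨le_of_lt hε0, hερq⟩
  -- the points are in the ζ-ball
  have hpb : dist (p ε) x < ζ := by
    rw [dist_eq_norm]
    calc ‖p ε - x‖ ≤ Cp * ε := hp1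
      _ ≤ Cm * ε := mul_le_mul_of_nonneg_right (le_max_left _ _) (le_of_lt hε0)
      _ < Cm * (ζ / (2 * Cm)) := by
          apply mul_lt_mul_of_pos_left hεζ hCm0
      _ = ζ / 2 := by field_simp
      _ < ζ := by linarith
  have hqb : dist (q ε) x < ζ := by
    rw [dist_eq_norm]
    calc ‖q ε - x‖ ≤ Cq * ε := hq1
      _ ≤ Cm * ε := mul_le_mul_of_nonneg_right (le_max_right _ _) (le_of_lt hε0)
      _ < Cm * (ζ / (2 * Cm)) := by
          apply mul_lt_mul_of_pos_left hεζ hCm0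
      _ = ζ / 2 := by field_simp
      _ < ζ := by linarith
  have hdistpair : dist ((p ε, q ε) : E × E) (x, x) < ζ := by
    rw [Prod.dist_eq]
    exact max_lt hpb hqb
  have hkey := hball hdistpair
  simp only [Real.norm_eq_abs] at hkey
  -- decompose p ε - q ε
  set Ep : E := p ε - (x + ε • b + ε^2 • cp) with hEp
  set Eq : E := q ε - (x + ε • b + ε^2 • cq) with hEq
  have hdecomp : p ε - q ε = ε^2 • (cp - cq) + (Ep - Eq) := by
    simp only [hEp, hEq, smul_sub]
    abel
  have hEpq : ‖Ep - Eq‖ ≤ Cp * ε^3 + Cq * ε^3 := by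
    calc ‖Ep - Eq‖ ≤ ‖Ep‖ + ‖Eq‖ := norm_sub_le _ _
      _ ≤ Cp * ε^3 + Cq * ε^3 := by linarith
  have hpqnorm : ‖p ε - q ε‖ ≤ ε^2 * ‖cp - cq‖ + (Cp * ε^3 + Cq * ε^3) := by
    rw [hdecomp]
    calc ‖ε^2 • (cp - cq) + (Ep - Eq)‖ ≤ ‖ε^2 • (cp - cq)‖ + ‖Ep - Eq‖ := norm_add_le _ _
      _ ≤ ε^2 * ‖cp - cq‖ + (Cp * ε^3 + Cq * ε^3) := by
          rw [norm_smul, Real.norm_eq_abs, abs_of_nonneg (by positivity)]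
          linarith
  have hφpq : φ (p ε - q ε) = ε^2 * S + φ (Ep - Eq) := by
    rw [hdecomp, map_add, map_smul, hS]
    simp [smul_eq_mul]
  have hφE : |φ (Ep - Eq)| ≤ ‖φ‖ * (Cp * ε^3 + Cq * ε^3) := by
    calc |φ (Ep - Eq)| ≤ ‖φ‖ * ‖Ep - Eq‖ := φ.le_opNorm _
      _ ≤ ‖φ‖ * (Cp * ε^3 + Cq * ε^3) :=
          mul_le_mul_of_nonneg_left hEpq (norm_nonneg _)
  -- main estimate
  have habs : |L (p ε) - L (q ε) - φ (p ε - q ε)| ≤ η * ‖p ε - q ε‖ := hkey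
  have h1 : L (p ε) - L (q ε) ≤ φ (p ε - q ε) + η * ‖p ε - q ε‖ := by
    have := abs_le.mp habs
    linarith [this.2]
  have hηid : η * (‖cp - cq‖ + 1) = -S / 2 := by
    rw [hη]; field_simp
  have hηcp : η * ‖cp - cq‖ ≤ -S / 2 := by
    rw [← hηid]
    have : η * (‖cp - cq‖ + 1) = η * ‖cp - cq‖ + η := by ring
    linarith
  have hfinal : L (p ε) - L (q ε) ≤ ε^2 * (S / 2) + ε^3 * B := by
    have e1 : φ (p ε - q ε) ≤ ε^2 * S + ‖φ‖ * (Cp * ε^3 + Cq * ε^3) := by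
      rw [hφpq]
      have := abs_le.mp hφE
      linarith [this.2]
    have e2 : η * ‖p ε - q ε‖ ≤ η * (ε^2 * ‖cp - cq‖) + η * (Cp * ε^3 + Cq * ε^3) := by
      calc η * ‖p ε - q ε‖ ≤ η * (ε^2 * ‖cp - cq‖ + (Cp * ε^3 + Cq * ε^3)) :=
            mul_le_mul_of_nonneg_left hpqnorm (le_of_lt hη0)
        _ = η * (ε^2 * ‖cp - cq‖) + η * (Cp * ε^3 + Cq * ε^3) := by ring
    have e3 : η * (ε^2 * ‖cp - cq‖) ≤ ε^2 * (-S/2) := by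
      calc η * (ε^2 * ‖cp - cq‖) = ε^2 * (η * ‖cp - cq‖) := by ring
        _ ≤ ε^2 * (-S/2) := mul_le_mul_of_nonneg_left hηcp (by positivity)
    have expand : ε^2 * S + ‖φ‖ * (Cp * ε^3 + Cq * ε^3) + ε^2 * (-S/2)
        + η * (Cp * ε^3 + Cq * ε^3) = ε^2 * (S/2) + ε^3 * B := by
      rw [hB]; ring
    linarith [e1, e2, e3, h1, expand]
  have hlast : ε^2 * (S / 2) + ε^3 * B < 0 := by
    have hεB : ε * B < -S/2 := by
      have h2 : ε * (B + 1) < -S/2 := by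
        calc ε * (B + 1) < ((-S/2) / (B+1)) * (B+1) :=
              mul_lt_mul_of_pos_right hεS (by linarith)
          _ = -S/2 := by field_simp
      have : ε * (B + 1) = ε * B + ε := by ring
      linarith
    have : ε^3 * B = ε^2 * (ε * B) := by ring
    rw [this]
    have h4 : ε^2 * (ε * B) < ε^2 * (-S/2) := mul_lt_mul_of_pos_left hεB (by positivity)
    have h5 : ε^2 * (S/2) + ε^2 * (-S/2) = 0 := by ring
    linarith
  linarith


end FlowLemmas

section GradHelp
variable {F : Type*} [NormedAddCommGroup F] [InnerProductSpace ℝ F] [CompleteSpace F]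

lemma contDiff_gradient_of_contDiff {f : F → ℝ} (hf : ContDiff ℝ 3 f) :
    ContDiff ℝ 2 (gradient f) := by
  have h1 : ContDiff ℝ 2 (fderiv ℝ f) := hf.fderiv_right (by norm_num)
  have h2 : gradient f = fun z => (InnerProductSpace.toDual ℝ F).symm (fderiv ℝ f z) := rfl
  rw [h2]
  exact ((InnerProductSpace.toDual ℝ F).symm.toContinuousLinearEquiv.toContinuousLinearMap.contDiff).comp h1

lemma gradient_smul_sum {K : ℕ} (Lk : Fin K → F → ℝ) (w : Fin K → ℝ)
    (hLk : ∀ k, ∀ z, DifferentiableAt ℝ (Lk k) z) (z : F) :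
    gradient (fun y => ∑ k, w k * Lk k y) z = ∑ k, w k • gradient (Lk k) z := by
  have hs : HasFDerivAt (fun y => ∑ k, w k * Lk k y) (∑ k, w k • fderiv ℝ (Lk k) z) z := by
    apply HasFDerivAt.fun_sum
    intro k _
    exact ((hLk k z).hasFDerivAt).const_mul (w k)
  have h2 : gradient (fun y => ∑ k, w k * Lk k y) z
      = (InnerProductSpace.toDual ℝ F).symm (∑ k, w k • fderiv ℝ (Lk k) z) := by
    show (InnerProductSpace.toDual ℝ F).symm (fderiv ℝ (fun y => ∑ k, w k * Lk k y) z) = _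
    rw [hs.fderiv]
  rw [h2, map_sum]
  exact Finset.sum_congr rfl (fun k _ => by rw [map_smul]; rfl)

lemma gradient_sub' {f g : F → ℝ} (hf : ∀ z, DifferentiableAt ℝ f z)
    (hg : ∀ z, DifferentiableAt ℝ g z) (z : F) :
    gradient (fun y => f y - g y) z = gradient f z - gradient g z := by
  have hs : HasFDerivAt (fun y => f y - g y) (fderiv ℝ f z - fderiv ℝ g z) z :=
    ((hf z).hasFDerivAt).sub ((hg z).hasFDerivAt)
  have h2 : gradient (fun y => f y - g y) z
      = (InnerProductSpace.toDual ℝ F).symm (fderiv ℝ f z - fderiv ℝ g z) := by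
    show (InnerProductSpace.toDual ℝ F).symm (fderiv ℝ (fun y => f y - g y) z) = _
    rw [hs.fderiv]
  rw [h2, map_sub]
  rfl

open scoped RealInnerProductSpace in
lemma inner_gradient_eq {L : F → ℝ} (m : F) : ⟪m, gradient L x⟫ = fderiv ℝ L x m := by
  rw [real_inner_comm]
  exact InnerProductSpace.toDual_symm_apply

end GradHelp


open Asymptotics Topology
open scoped RealInnerProductSpace

set_option maxHeartbeats 2000000 in
/-- Local optimality criterion: if `P(L_i − L_j, Σ_k w_k L_k; L)(x) ≠ 0` and both
weights `w_i, w_j` are positive, then there are `δ > 0` with `δ ≤ min(w_i, w_j)`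
and `ε₀ > 0` such that for all `ε ∈ (0, ε₀)` one of the two reordered
trajectories (perturbing the weights of domains `i, j` by `±δ` on the two halves
of the time interval) strictly improves the loss `L` over the constant-weight
trajectory. Here `Φ₁ δ`, `Φ₂ δ` are the flows of
`u₁ = −Σ_k w_k ∇L_k − δ(∇L_i − ∇L_j)` and `u₂ = −Σ_k w_k ∇L_k + δ(∇L_i − ∇L_j)`,
and `Φbar` is the flow of `v = −Σ_k w_k ∇L_k`. -/
theorem reordering_strictly_improves_of_commutator_ne_zero {n K : ℕ}
    (L : EuclideanSpace ℝ (Fin n) → ℝ)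
    (Lk : Fin K → EuclideanSpace ℝ (Fin n) → ℝ)
    (hL : ContDiff ℝ 1 L) (hLk : ∀ k, ContDiff ℝ 3 (Lk k))
    (w : Fin K → ℝ) (hw1 : ∑ k, w k = 1)
    (i j : Fin K) (hij : i ≠ j) (hwi : 0 < w i) (hwj : 0 < w j)
    (x : EuclideanSpace ℝ (Fin n))
    (hP : ⟪fderiv ℝ (gradient (fun y => ∑ k, w k * Lk k y)) x
              (gradient (Lk i) x - gradient (Lk j) x)
            - fderiv ℝ (gradient (fun y => Lk i y - Lk j y)) x
              (∑ k, w k • gradient (Lk k) x),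
            gradient L x⟫ ≠ 0)
    (Φ₁ Φ₂ : ℝ → ℝ → EuclideanSpace ℝ (Fin n) → EuclideanSpace ℝ (Fin n))
    (Φbar : ℝ → EuclideanSpace ℝ (Fin n) → EuclideanSpace ℝ (Fin n))
    (hΦ₁0 : ∀ δ y, Φ₁ δ 0 y = y) (hΦ₂0 : ∀ δ y, Φ₂ δ 0 y = y)
    (hΦbar0 : ∀ y, Φbar 0 y = y)
    (hΦ₁ : ∀ δ : ℝ, ∃ r > (0 : ℝ), ∀ y, ∀ t : ℝ, |t| < r →
      HasDerivAt (fun s => Φ₁ δ s y)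
        (-(∑ k, w k • gradient (Lk k) (Φ₁ δ t y))
          - δ • (gradient (Lk i) (Φ₁ δ t y) - gradient (Lk j) (Φ₁ δ t y))) t)
    (hΦ₂ : ∀ δ : ℝ, ∃ r > (0 : ℝ), ∀ y, ∀ t : ℝ, |t| < r →
      HasDerivAt (fun s => Φ₂ δ s y)
        (-(∑ k, w k • gradient (Lk k) (Φ₂ δ t y))
          + δ • (gradient (Lk i) (Φ₂ δ t y) - gradient (Lk j) (Φ₂ δ t y))) t)
    (hΦbar : ∃ r > (0 : ℝ), ∀ y, ∀ t : ℝ, |t| < r →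
      HasDerivAt (fun s => Φbar s y)
        (-(∑ k, w k • gradient (Lk k) (Φbar t y))) t) :
    ∃ δ : ℝ, 0 < δ ∧ δ ≤ min (w i) (w j) ∧
      ∃ ε₀ > (0 : ℝ), ∀ ε : ℝ, 0 < ε → ε < ε₀ →
        min (L (Φ₂ δ ε (Φ₁ δ ε x))) (L (Φ₁ δ ε (Φ₂ δ ε x))) < L (Φbar (2 * ε) x) := by
  classical
  set δ : ℝ := min (w i) (w j) with hδdef
  have hδ0 : 0 < δ := lt_min hwi hwj
  obtain ⟨r₁, hr₁, hF₁⟩ := hΦ₁ δ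
  obtain ⟨r₂, hr₂, hF₂⟩ := hΦ₂ δ
  obtain ⟨rv, hrv, hFv⟩ := hΦbar
  have hdiffk : ∀ k, ∀ z : EuclideanSpace ℝ (Fin n), DifferentiableAt ℝ (Lk k) z :=
    fun k z => ((hLk k).differentiable (by norm_num)).differentiableAt
  set W : EuclideanSpace ℝ (Fin n) → EuclideanSpace ℝ (Fin n) := gradient (fun y => ∑ k, w k * Lk k y) with hWdef
  set A : EuclideanSpace ℝ (Fin n) → EuclideanSpace ℝ (Fin n) := gradient (fun y => Lk i y - Lk j y) with hAdef
  have hWz : ∀ z : EuclideanSpace ℝ (Fin n), W z = ∑ k, w k • gradient (Lk k) z := fun z =>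
    gradient_smul_sum Lk w hdiffk z
  have hAz : ∀ z : EuclideanSpace ℝ (Fin n), A z = gradient (Lk i) z - gradient (Lk j) z := fun z =>
    gradient_sub' (hdiffk i) (hdiffk j) z
  set u₁ : EuclideanSpace ℝ (Fin n) → EuclideanSpace ℝ (Fin n) := fun z => -W z - δ • A z with hu₁def
  set u₂ : EuclideanSpace ℝ (Fin n) → EuclideanSpace ℝ (Fin n) := fun z => -W z + δ • A z with hu₂def
  set v : EuclideanSpace ℝ (Fin n) → EuclideanSpace ℝ (Fin n) := fun z => -W z with hvdef
  have hWc : ContDiff ℝ 2 W := contDiff_gradient_of_contDiff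
    (ContDiff.sum fun k _ => contDiff_const.mul (hLk k))
  have hAc : ContDiff ℝ 2 A := contDiff_gradient_of_contDiff ((hLk i).sub (hLk j))
  have hu₁c : ContDiff ℝ 2 u₁ := (hWc.neg).sub (hAc.const_smul δ)
  have hu₂c : ContDiff ℝ 2 u₂ := (hWc.neg).add (hAc.const_smul δ)
  have hvc : ContDiff ℝ 2 v := hWc.neg
  -- convert the flow hypotheses
  have hF₁' : ∀ y : EuclideanSpace ℝ (Fin n), ∀ t : ℝ, |t| < r₁ →
      HasDerivAt (fun s => Φ₁ δ s y) (u₁ (Φ₁ δ t y)) t := by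
    intro y t ht
    have h := hF₁ y t ht
    have he : u₁ (Φ₁ δ t y) = -(∑ k, w k • gradient (Lk k) (Φ₁ δ t y))
        - δ • (gradient (Lk i) (Φ₁ δ t y) - gradient (Lk j) (Φ₁ δ t y)) := by
      show -W (Φ₁ δ t y) - δ • A (Φ₁ δ t y) = _
      rw [hWz, hAz]
    rw [he]
    exact h
  have hF₂' : ∀ y : EuclideanSpace ℝ (Fin n), ∀ t : ℝ, |t| < r₂ →
      HasDerivAt (fun s => Φ₂ δ s y) (u₂ (Φ₂ δ t y)) t := by
    intro y t ht
    have h := hF₂ y t ht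
    have he : u₂ (Φ₂ δ t y) = -(∑ k, w k • gradient (Lk k) (Φ₂ δ t y))
        + δ • (gradient (Lk i) (Φ₂ δ t y) - gradient (Lk j) (Φ₂ δ t y)) := by
      show -W (Φ₂ δ t y) + δ • A (Φ₂ δ t y) = _
      rw [hWz, hAz]
    rw [he]
    exact h
  have hFv' : ∀ y : EuclideanSpace ℝ (Fin n), ∀ t : ℝ, |t| < rv →
      HasDerivAt (fun s => Φbar s y) (v (Φbar t y)) t := by
    intro y t ht
    have h := hFv y t ht
    have he : v (Φbar t y) = -(∑ k, w k • gradient (Lk k) (Φbar t y)) := by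
      show -W (Φbar t y) = _
      rw [hWz]
    rw [he]
    exact h
  -- expansions
  obtain ⟨C12, hC12, ρ12, hρ12, H12⟩ :=
    comp_taylor hu₁c hu₂c (hΦ₁0 δ) (hΦ₂0 δ) hr₁ hr₂ hF₁' hF₂' x
  obtain ⟨C21, hC21, ρ21, hρ21, H21⟩ :=
    comp_taylor hu₂c hu₁c (hΦ₂0 δ) (hΦ₁0 δ) hr₂ hr₁ hF₂' hF₁' x
  obtain ⟨Cv, hCv1, ρv, hρv0, _, Hv⟩ := flow_taylor hvc hΦbar0 hrv hFv' x
  have hCv0 : (0:ℝ) < Cv := lt_of_lt_of_le one_pos hCv1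
  -- second-order coefficients
  set cp12 : EuclideanSpace ℝ (Fin n) := (1/2 : ℝ) • (fderiv ℝ u₁ x (u₁ x)) + fderiv ℝ u₂ x (u₁ x)
    + (1/2 : ℝ) • (fderiv ℝ u₂ x (u₂ x)) with hcp12
  set cp21 : EuclideanSpace ℝ (Fin n) := (1/2 : ℝ) • (fderiv ℝ u₂ x (u₂ x)) + fderiv ℝ u₁ x (u₂ x)
    + (1/2 : ℝ) • (fderiv ℝ u₁ x (u₁ x)) with hcp21
  set cq : EuclideanSpace ℝ (Fin n) := (2:ℝ) • (fderiv ℝ v x (v x)) with hcq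
  -- fderiv computations
  have hWd : DifferentiableAt ℝ W x := (hWc.differentiable (by norm_num)).differentiableAt
  have hAd : DifferentiableAt ℝ A x := (hAc.differentiable (by norm_num)).differentiableAt
  have hfu₁ : fderiv ℝ u₁ x = -fderiv ℝ W x - δ • fderiv ℝ A x := by
    rw [hu₁def]
    rw [fderiv_fun_sub (f := fun z => -W z) (g := fun z => δ • A z) (hWd.neg) (hAd.const_smul δ), fderiv_fun_neg, fderiv_fun_const_smul hAd δ]
  have hfu₂ : fderiv ℝ u₂ x = -fderiv ℝ W x + δ • fderiv ℝ A x := by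
    rw [hu₂def]
    rw [fderiv_fun_add (f := fun z => -W z) (g := fun z => δ • A z) (hWd.neg) (hAd.const_smul δ), fderiv_fun_neg, fderiv_fun_const_smul hAd δ]
  have hfv : fderiv ℝ v x = -fderiv ℝ W x := by
    rw [hvdef, fderiv_fun_neg]
  set m₀ : EuclideanSpace ℝ (Fin n) := fderiv ℝ W x (A x) - fderiv ℝ A x (W x) with hm₀
  have hval1 : u₁ x = -W x - δ • A x := rfl
  have hval2 : u₂ x = -W x + δ • A x := rfl
  have hvalv : v x = -W x := rfl
  have hkey12 : cp12 - cq = δ • m₀ := by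
    rw [hcp12, hcq, hm₀, hfu₁, hfu₂, hfv, hval1, hval2, hvalv]
    simp only [ContinuousLinearMap.sub_apply, ContinuousLinearMap.add_apply,
      ContinuousLinearMap.neg_apply, ContinuousLinearMap.smul_apply,
      map_sub, map_add, map_smul, map_neg, smul_sub, smul_add, smul_neg]
    module
  have hkey21 : cp21 - cq = (-δ) • m₀ := by
    rw [hcp21, hcq, hm₀, hfu₁, hfu₂, hfv, hval1, hval2, hvalv]
    simp only [ContinuousLinearMap.sub_apply, ContinuousLinearMap.add_apply,
      ContinuousLinearMap.neg_apply, ContinuousLinearMap.smul_apply,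
      map_sub, map_add, map_smul, map_neg, smul_sub, smul_add, smul_neg]
    module
  -- the commutator pairing
  rw [← hAz x, ← hWz x] at hP
  have hPval : fderiv ℝ L x m₀ ≠ 0 := by
    rw [← inner_gradient_eq, ← hm₀] at *
    exact hP
  -- the q-side expansion
  have hqgen : ∀ b' : EuclideanSpace ℝ (Fin n), b' = u₁ x + u₂ x → ∀ ε ∈ Icc (0:ℝ) (ρv / 2),
      ‖Φbar (2 * ε) x - (x + ε • b' + ε^2 • cq)‖ ≤ (8 * Cv) * ε^3
        ∧ ‖Φbar (2 * ε) x - x‖ ≤ (8 * Cv) * ε := by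
    rintro b' hb' ε ⟨hε0, hερ⟩
    have h2ε : (2 * ε) ∈ Icc (0:ℝ) ρv := ⟨by linarith, by linarith⟩
    obtain ⟨o1, o3⟩ := Hv x (mem_closedBall_self (by norm_num)) (2 * ε) h2ε
    have hbase : x + (2 * ε) • v x + ((2 * ε)^2 / 2) • (fderiv ℝ v x (v x))
        = x + ε • b' + ε^2 • cq := by
      rw [hb', hcq, hval1, hval2, hvalv]
      module
    constructor
    · rw [← hbase]
      calc ‖Φbar (2 * ε) x - (x + (2 * ε) • v x + ((2 * ε)^2 / 2) • (fderiv ℝ v x (v x)))‖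
          ≤ Cv * (2 * ε)^3 := o3
        _ = (8 * Cv) * ε^3 := by ring
    · calc ‖Φbar (2 * ε) x - x‖ ≤ Cv * (2 * ε) := o1
        _ ≤ (8 * Cv) * ε := by
            have hnn : 0 ≤ Cv * ε := mul_nonneg (le_of_lt hCv0) hε0
            nlinarith [hnn]
  have h8Cv : (0:ℝ) < 8 * Cv := by linarith
  have hρv2 : (0:ℝ) < ρv / 2 := by linarith
  refine ⟨δ, hδ0, le_refl _, ?_⟩
  rcases hPval.lt_or_gt with hneg | hpos
  · -- P < 0 : use Φ₂ ∘ Φ₁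
    have hnegp : fderiv ℝ L x (cp12 - cq) < 0 := by
      rw [hkey12, map_smul, smul_eq_mul]
      exact mul_neg_of_pos_of_neg hδ0 hneg
    obtain ⟨ε₀, hε₀, hlt⟩ := endgame hL x (fun ε => Φ₂ δ ε (Φ₁ δ ε x))
      (fun ε => Φbar (2 * ε) x) (u₁ x + u₂ x) cp12 cq hC12 h8Cv hρ12 hρv2
      (fun ε hε => H12 ε hε) (hqgen _ rfl) hnegp
    exact ⟨ε₀, hε₀, fun ε h1 h2 =>
      lt_of_le_of_lt (min_le_left _ _) (hlt ε h1 h2)⟩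
  · -- P > 0 : use Φ₁ ∘ Φ₂
    have hnegp : fderiv ℝ L x (cp21 - cq) < 0 := by
      rw [hkey21, map_smul, smul_eq_mul]
      have : -δ < 0 := by linarith
      exact mul_neg_of_neg_of_pos this hpos
    obtain ⟨ε₀, hε₀, hlt⟩ := endgame hL x (fun ε => Φ₁ δ ε (Φ₂ δ ε x))
      (fun ε => Φbar (2 * ε) x) (u₂ x + u₁ x) cp21 cq hC21 h8Cv hρ21 hρv2
      (fun ε hε => H21 ε hε) (hqgen _ (add_comm _ _)) hnegp
    exact ⟨ε₀, hε₀, fun ε h1 h2 =>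
      lt_of_le_of_lt (min_le_right _ _) (hlt ε h1 h2)⟩
end

section
/- Let L₁, …, L_K : ℝⁿ → ℝ be twice continuously differentiable, let w₁, …, w_K : ℝ → ℝ be bounded, nonnegative, right-continuous functions, and let θ : [t₀, t₀+T] → ℝⁿ be differentiable with θ'(t) = −Σ_k w_k(t)·∇L_k(θ(t)) for all t ∈ [t₀, t₀+T]. Then as τ → 0⁺, θ(t₀+τ) = θ(t₀) − Σ_k (∫_{t₀}^{t₀+τ} w_k(s) ds)·∇L_k(θ(t₀)) + Σ_{k₁,k₂} (∫_{t₀}^{t₀+τ} ∫_{t₀}^{s} w_{k₁}(s)·w_{k₂}(r) dr ds)·Hess L_{k₁}(θ(t₀))·∇L_{k₂}(θ(t₀)) + o(τ²). -/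
open Asymptotics Topology MeasureTheory Set intervalIntegral

lemma measurable_of_rightCont (f : ℝ → ℝ)
    (hf : ∀ t, ContinuousWithinAt f (Set.Ici t) t) : Measurable f := by
  have hm : ∀ m : ℕ, Measurable (fun t : ℝ => f ((⌈(m + 1 : ℝ) * t⌉ : ℤ) / (m + 1 : ℝ))) := by
    intro m
    exact (Measurable.of_discrete (f := fun z : ℤ => f ((z : ℝ) / (m + 1 : ℝ)))).comp
      (Int.measurable_ceil.comp (measurable_const_mul _))
  apply measurable_of_tendsto_metrizable hm
  rw [tendsto_pi_nhds]
  intro t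
  apply (hf t).tendsto.comp
  have hpos : ∀ m : ℕ, (0 : ℝ) < (m + 1 : ℝ) := fun m => by positivity
  have hge : ∀ m : ℕ, t ≤ (⌈(m + 1 : ℝ) * t⌉ : ℝ) / (m + 1 : ℝ) := by
    intro m
    rw [le_div_iff₀ (hpos m)]
    calc t * (m + 1 : ℝ) = (m + 1 : ℝ) * t := mul_comm _ _
    _ ≤ _ := Int.le_ceil _
  have hle : ∀ m : ℕ, (⌈(m + 1 : ℝ) * t⌉ : ℝ) / (m + 1 : ℝ) ≤ t + 1 / (m + 1 : ℝ) := by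
    intro m
    rw [div_le_iff₀ (hpos m)]
    calc (⌈(m + 1 : ℝ) * t⌉ : ℝ) ≤ (m + 1 : ℝ) * t + 1 := (Int.ceil_lt_add_one _).le
    _ = (t + 1 / (m + 1 : ℝ)) * (m + 1 : ℝ) := by field_simp
  apply tendsto_nhdsWithin_of_tendsto_nhds_of_eventually_within
  · apply tendsto_of_tendsto_of_tendsto_of_le_of_le (g := fun _ : ℕ => t)
      (h := fun m : ℕ => t + 1 / (m + 1 : ℝ)) tendsto_const_nhds ?_ hge hle
    have h0 : Filter.Tendsto (fun m : ℕ => 1 / (m + 1 : ℝ)) Filter.atTop (𝓝 0) :=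
      tendsto_one_div_add_atTop_nhds_zero_nat
    simpa using tendsto_const_nhds.add h0
  · exact Filter.Eventually.of_forall fun m => hge m

noncomputable def dualCLM (E : Type*) [NormedAddCommGroup E] [InnerProductSpace ℝ E]
    [CompleteSpace E] : StrongDual ℝ E →L[ℝ] E :=
  ⟨{ toFun := fun y => (InnerProductSpace.toDual ℝ E).symm y,
     map_add' := fun x y => map_add _ x y,
     map_smul' := fun c y => by
       simp only [map_smulₛₗ, starRingEnd_apply, star_trivial, RingHom.id_apply] },
   (InnerProductSpace.toDual ℝ E).symm.continuous⟩

lemma contDiff_gradient {E : Type*} [NormedAddCommGroup E] [InnerProductSpace ℝ E]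
    [CompleteSpace E] (f : E → ℝ) (hf : ContDiff ℝ 2 f) : ContDiff ℝ 1 (gradient f) := by
  have h1 : ContDiff ℝ 1 (fderiv ℝ f) := hf.fderiv_right (by norm_num)
  exact (dualCLM E).contDiff.comp h1

lemma intervalIntegrable_sum' {ι : Type*} (s : Finset ι) {E : Type*} [NormedAddCommGroup E]
    {f : ι → ℝ → E} {μ : Measure ℝ} {a b : ℝ}
    (h : ∀ i ∈ s, IntervalIntegrable (f i) μ a b) :
    IntervalIntegrable (fun x => ∑ i ∈ s, f i x) μ a b := by
  rw [← Finset.sum_fn]; exact IntervalIntegrable.sum s h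

lemma IntervalIntegrable.smul_const' {f : ℝ → ℝ} {μ : Measure ℝ} {a b : ℝ}
    {E : Type*} [NormedAddCommGroup E] [NormedSpace ℝ E]
    (hf : IntervalIntegrable f μ a b) (c : E) :
    IntervalIntegrable (fun x => f x • c) μ a b :=
  ⟨hf.1.smul_const c, hf.2.smul_const c⟩

set_option maxHeartbeats 1000000 in
/-- Second-order expansion of a multi-domain gradient-descent trajectory with a
weight schedule: if `θ'(t) = −Σ_k w_k(t)·∇L_k(θ(t))` on `[t₀, t₀+T]` with each
`w_k` bounded, nonnegative and right-continuous, then as `τ → 0⁺`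
`θ(t₀+τ) = θ(t₀) − Σ_k (∫ w_k)·∇L_k(θ(t₀))
    + Σ_{k₁,k₂} (∫∫ w_{k₁}(s)w_{k₂}(r))·Hess L_{k₁}(θ(t₀))∇L_{k₂}(θ(t₀)) + o(τ²)`. -/
theorem trajectory_second_order_expansion {n K : ℕ}
    (L : Fin K → EuclideanSpace ℝ (Fin n) → ℝ)
    (hL : ∀ k, ContDiff ℝ 2 (L k))
    (w : Fin K → ℝ → ℝ)
    (hw_bdd : ∀ k, ∃ C : ℝ, ∀ t, w k t ≤ C)
    (hw_nonneg : ∀ k t, 0 ≤ w k t)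
    (hw_rc : ∀ k t, ContinuousWithinAt (w k) (Set.Ici t) t)
    (t₀ T : ℝ) (hT : 0 < T)
    (θ : ℝ → EuclideanSpace ℝ (Fin n))
    (hθ : ∀ t ∈ Set.Icc t₀ (t₀ + T),
      HasDerivWithinAt θ (-(∑ k, w k t • gradient (L k) (θ t)))
        (Set.Icc t₀ (t₀ + T)) t) :
    (fun τ : ℝ =>
        θ (t₀ + τ) - θ t₀
          + ∑ k, (∫ s in t₀..(t₀ + τ), w k s) • gradient (L k) (θ t₀)
          - ∑ k₁, ∑ k₂,
              (∫ s in t₀..(t₀ + τ), ∫ r in t₀..s, w k₁ s * w k₂ r) •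
                fderiv ℝ (gradient (L k₁)) (θ t₀) (gradient (L k₂) (θ t₀)))
      =o[𝓝[>] 0] fun τ : ℝ => τ ^ 2 := by
  classical
  have ht₀I : t₀ ∈ Set.Icc t₀ (t₀ + T) := ⟨le_rfl, by linarith⟩
  have hg1 : ∀ k, ContDiff ℝ 1 (gradient (L k)) := fun k => contDiff_gradient _ (hL k)
  have hgc : ∀ k, Continuous (gradient (L k)) := fun k => (hg1 k).continuous
  set H : Fin K → _ := fun k => fderiv ℝ (gradient (L k)) (θ t₀) with hHdef
  -- bound on weights
  choose C hC using hw_bdd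
  set M : ℝ := 1 + ∑ k, |C k| with hMdef
  have hM1 : (1 : ℝ) ≤ M := le_add_of_nonneg_right (Finset.sum_nonneg fun k _ => abs_nonneg _)
  have hM0 : (0 : ℝ) < M := lt_of_lt_of_le one_pos hM1
  have hwM : ∀ k t, |w k t| ≤ M := by
    intro k t
    rw [abs_of_nonneg (hw_nonneg k t)]
    calc w k t ≤ C k := hC k t
    _ ≤ |C k| := le_abs_self _
    _ ≤ ∑ k, |C k| := Finset.single_le_sum (f := fun k => |C k|) (fun k _ => abs_nonneg _) (Finset.mem_univ k)
    _ ≤ M := by rw [hMdef]; linarith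
  -- continuity of θ
  have hθc : ContinuousOn θ (Set.Icc t₀ (t₀ + T)) := fun t ht => (hθ t ht).continuousWithinAt
  -- bound on gradients along trajectory
  have hBk : ∀ k, ∃ Bk, ∀ s ∈ Set.Icc t₀ (t₀ + T), ‖gradient (L k) (θ s)‖ ≤ Bk := fun k =>
    isCompact_Icc.exists_bound_of_continuousOn ((hgc k).comp_continuousOn hθc)
  choose Bk hBk' using hBk
  set B : ℝ := 1 + ∑ k, |Bk k| with hBdef
  have hB0 : (0 : ℝ) < B :=
    lt_of_lt_of_le one_pos (le_add_of_nonneg_right (Finset.sum_nonneg fun k _ => abs_nonneg _))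
  have hBbd : ∀ k, ∀ s ∈ Set.Icc t₀ (t₀ + T), ‖gradient (L k) (θ s)‖ ≤ B := by
    intro k s hs
    calc ‖gradient (L k) (θ s)‖ ≤ Bk k := hBk' k s hs
    _ ≤ |Bk k| := le_abs_self _
    _ ≤ ∑ k, |Bk k| := Finset.single_le_sum (f := fun k => |Bk k|) (fun k _ => abs_nonneg _) (Finset.mem_univ k)
    _ ≤ B := by rw [hBdef]; linarith
  set HB : ℝ := 1 + ∑ k, ‖H k‖ with hHBdef
  have hHB0 : (0 : ℝ) < HB :=
    lt_of_lt_of_le one_pos (le_add_of_nonneg_right (Finset.sum_nonneg fun k _ => norm_nonneg _))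
  have hHBk : ∀ k, ‖H k‖ ≤ HB := by
    intro k
    calc ‖H k‖ ≤ ∑ k, ‖H k‖ := Finset.single_le_sum (f := fun k => ‖H k‖) (fun k _ => norm_nonneg _) (Finset.mem_univ k)
    _ ≤ HB := by rw [hHBdef]; linarith
  -- measurability and integrability
  have hwm : ∀ k, Measurable (w k) := fun k => measurable_of_rightCont (w k) (hw_rc k)
  have hIIw : ∀ k (a b : ℝ), IntervalIntegrable (w k) volume a b := by
    intro k a b
    rw [intervalIntegrable_iff]
    refine Integrable.mono' (g := fun _ => M)
      (integrableOn_const ?_) ((hwm k).aestronglyMeasurable.restrict) ?_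
    · rw [Set.uIoc]; exact measure_Ioc_lt_top.ne
    · exact Filter.Eventually.of_forall fun t => by simpa [Real.norm_eq_abs] using hwM k t
  have hprim_bd : ∀ k, ∀ s ∈ Set.Icc t₀ (t₀ + T), |∫ r in t₀..s, w k r| ≤ M * T := by
    intro k s hs
    have h1 : ‖∫ r in t₀..s, w k r‖ ≤ M * |s - t₀| :=
      intervalIntegral.norm_integral_le_of_norm_le_const
        (fun x _ => by simpa [Real.norm_eq_abs] using hwM k x)
    rw [Real.norm_eq_abs] at h1
    have h2 : |s - t₀| ≤ T := by
      rw [abs_of_nonneg (by linarith [hs.1])]; linarith [hs.2]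
    calc |∫ r in t₀..s, w k r| ≤ M * |s - t₀| := h1
    _ ≤ M * T := mul_le_mul_of_nonneg_left h2 hM0.le
  have hIIsmul : ∀ k (s : ℝ), s ∈ Set.Icc t₀ (t₀ + T) →
      IntervalIntegrable (fun r => w k r • gradient (L k) (θ r)) volume t₀ s := by
    intro k s hs
    rw [intervalIntegrable_iff_integrableOn_Ioc_of_le hs.1]
    have hsub : Set.Ioc t₀ s ⊆ Set.Icc t₀ (t₀ + T) := fun r hr => ⟨hr.1.le, le_trans hr.2 hs.2⟩
    refine Integrable.mono' (g := fun _ => M * B)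
      (integrableOn_const measure_Ioc_lt_top.ne) ?_ ?_
    · exact ((hwm k).aestronglyMeasurable.restrict).smul
        ((((hgc k).comp_continuousOn hθc).mono hsub).aestronglyMeasurable measurableSet_Ioc)
    · refine (MeasureTheory.ae_restrict_iff' measurableSet_Ioc).2
        (Filter.Eventually.of_forall fun r hr => ?_)
      rw [norm_smul, Real.norm_eq_abs]
      exact mul_le_mul (hwM k r) (hBbd k r (hsub hr)) (norm_nonneg _) hM0.le
  have hIIG : ∀ s ∈ Set.Icc t₀ (t₀ + T),
      IntervalIntegrable (fun r => -(∑ k, w k r • gradient (L k) (θ r))) volume t₀ s :=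
    fun s hs => (intervalIntegrable_sum' Finset.univ (fun k _ => hIIsmul k s hs)).neg
  -- FTC
  have key : ∀ s ∈ Set.Icc t₀ (t₀ + T),
      θ s - θ t₀ = ∫ r in t₀..s, -(∑ k, w k r • gradient (L k) (θ r)) := by
    intro s hs
    refine (intervalIntegral.integral_eq_sub_of_hasDeriv_right_of_le hs.1
      (hθc.mono (Set.Icc_subset_Icc_right hs.2)) ?_ (hIIG s hs)).symm
    intro x hx
    have hxI : x ∈ Set.Icc t₀ (t₀ + T) := ⟨hx.1.le, (hx.2.le.trans hs.2)⟩
    refine (hθ x hxI).mono_of_mem_nhdsWithin ?_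
    refine Filter.mem_of_superset
      (Ioc_mem_nhdsGT_of_mem ⟨le_rfl, lt_of_lt_of_le hx.2 hs.2⟩) ?_
    exact fun r hr => ⟨(hx.1.trans hr.1).le, hr.2⟩
  -- little-o part
  rw [Asymptotics.isLittleO_iff]
  intro ε hε
  set C₁ : ℝ := (K : ℝ) * M * B with hC₁def
  have hC₁0 : (0 : ℝ) ≤ C₁ := by positivity
  set ε₁ : ℝ := ε / (2 * ((K : ℝ) * M * C₁ + 1)) with hε₁def
  set ε₂ : ℝ := ε / (2 * ((K : ℝ) * M * HB * ((K : ℝ) * M) + 1)) with hε₂def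
  have hε₁0 : 0 < ε₁ := div_pos hε (by positivity)
  have hε₂0 : 0 < ε₂ := div_pos hε (by positivity)
  clear_value M B HB C₁ ε₁ ε₂
  have hθt : Filter.Tendsto θ (𝓝[≥] t₀) (𝓝 (θ t₀)) := by
    have h := hθc t₀ ht₀I
    rwa [ContinuousWithinAt, nhdsWithin_Icc_eq_nhdsGE (by linarith : t₀ < t₀ + T)] at h
  have hev : ∀ᶠ s in 𝓝[≥] t₀, ∀ k : Fin K,
      ‖gradient (L k) (θ s) - gradient (L k) (θ t₀)‖ ≤ ε₂ ∧
      ‖gradient (L k) (θ s) - gradient (L k) (θ t₀) - H k (θ s - θ t₀)‖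
        ≤ ε₁ * ‖θ s - θ t₀‖ := by
    rw [Filter.eventually_all]
    intro k
    have hA : ∀ᶠ x in 𝓝 (θ t₀), ‖gradient (L k) x - gradient (L k) (θ t₀)‖ ≤ ε₂ := by
      filter_upwards [((hgc k).tendsto (θ t₀)).eventually_mem (Metric.closedBall_mem_nhds _ hε₂0)] with x hx
      simpa [Metric.mem_closedBall, dist_eq_norm] using hx
    have hB' : ∀ᶠ x in 𝓝 (θ t₀),
        ‖gradient (L k) x - gradient (L k) (θ t₀) - H k (x - θ t₀)‖ ≤ ε₁ * ‖x - θ t₀‖ := by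
      have hd : HasFDerivAt (gradient (L k)) (H k) (θ t₀) :=
        (((hg1 k).differentiable one_ne_zero) (θ t₀)).hasFDerivAt
      exact hd.isLittleO.def hε₁0
    exact (hθt.eventually hA).and (hθt.eventually hB')
  obtain ⟨δ', hδ'1, hδ'2⟩ := mem_nhdsGE_iff_exists_Icc_subset.mp hev
  have hδ0 : 0 < min (δ' - t₀) T := lt_min (by linarith) hT
  filter_upwards [Ioo_mem_nhdsGT_of_mem (Set.mem_Ico.mpr ⟨le_rfl, hδ0⟩)] with τ hτ
  obtain ⟨hτ0, hτδ⟩ := hτ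
  have hτT : τ ≤ T := le_trans hτδ.le (min_le_right _ _)
  have hbI : t₀ + τ ∈ Set.Icc t₀ (t₀ + T) := ⟨by linarith, by linarith⟩
  have hsub : Set.Icc t₀ (t₀ + τ) ⊆ Set.Icc t₀ (t₀ + T) :=
    Set.Icc_subset_Icc_right (by linarith)
  have hP : ∀ s ∈ Set.Icc t₀ (t₀ + τ), ∀ k : Fin K,
      ‖gradient (L k) (θ s) - gradient (L k) (θ t₀)‖ ≤ ε₂ ∧
      ‖gradient (L k) (θ s) - gradient (L k) (θ t₀) - H k (θ s - θ t₀)‖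
        ≤ ε₁ * ‖θ s - θ t₀‖ := by
    intro s hs
    refine hδ'2 ⟨hs.1, ?_⟩
    have : τ ≤ δ' - t₀ := le_trans hτδ.le (min_le_left _ _)
    linarith [hs.2]
  have hττ : t₀ ≤ t₀ + τ := by linarith
  have habs : ∀ s ∈ Set.Icc t₀ (t₀ + τ), |s - t₀| ≤ τ := by
    intro s hs
    rw [abs_of_nonneg (by linarith [hs.1])]; linarith [hs.2]
  -- primitive sum identity
  have hVeq : ∀ s : ℝ, ∑ k, (∫ r in t₀..s, w k r) • gradient (L k) (θ t₀)
      = ∫ r in t₀..s, ∑ k, w k r • gradient (L k) (θ t₀) := by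
    intro s
    rw [intervalIntegral.integral_finset_sum (fun k _ => (hIIw k t₀ s).smul_const' _)]
    exact Finset.sum_congr rfl fun k _ => (intervalIntegral.integral_smul_const _ _).symm
  -- first-order bound on the trajectory
  have hθdist : ∀ s ∈ Set.Icc t₀ (t₀ + τ), ‖θ s - θ t₀‖ ≤ C₁ * τ := by
    intro s hs
    rw [key s (hsub hs)]
    have hb1 : ∀ r ∈ Set.uIoc t₀ s, ‖-(∑ k, w k r • gradient (L k) (θ r))‖
        ≤ (K : ℝ) * (M * B) := by
      intro r hr
      have hrI : r ∈ Set.Icc t₀ (t₀ + T) := by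
        rw [Set.uIoc_of_le hs.1] at hr
        exact ⟨hr.1.le, le_trans hr.2 (hsub hs).2⟩
      rw [norm_neg]
      calc ‖∑ k, w k r • gradient (L k) (θ r)‖
          ≤ ∑ k, ‖w k r • gradient (L k) (θ r)‖ := norm_sum_le _ _
      _ ≤ ∑ _k : Fin K, M * B := Finset.sum_le_sum (fun k _ => by
            rw [norm_smul, Real.norm_eq_abs]
            exact mul_le_mul (hwM k r) (hBbd k r hrI) (norm_nonneg _) hM0.le)
      _ = (K : ℝ) * (M * B) := by
            simp [Finset.sum_const, Finset.card_univ, nsmul_eq_mul]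
    refine le_trans (intervalIntegral.norm_integral_le_of_norm_le_const hb1) ?_
    rw [hC₁def]
    calc (K : ℝ) * (M * B) * |s - t₀| ≤ (K : ℝ) * (M * B) * τ :=
          mul_le_mul_of_nonneg_left (habs s hs) (by positivity)
    _ = (K : ℝ) * M * B * τ := by ring
  -- the first-order error of the trajectory
  have hE : ∀ s ∈ Set.Icc t₀ (t₀ + τ),
      ‖θ s - θ t₀ + ∑ k, (∫ r in t₀..s, w k r) • gradient (L k) (θ t₀)‖
        ≤ (K : ℝ) * (M * ε₂) * τ := by
    intro s hs
    rw [key s (hsub hs), hVeq s, ← intervalIntegral.integral_add (hIIG s (hsub hs))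
      (intervalIntegrable_sum' _ (fun k _ => (hIIw k t₀ s).smul_const' _))]
    have hb1 : ∀ r ∈ Set.uIoc t₀ s,
        ‖-(∑ k, w k r • gradient (L k) (θ r)) + ∑ k, w k r • gradient (L k) (θ t₀)‖
          ≤ (K : ℝ) * (M * ε₂) := by
      intro r hr
      have hr' : r ∈ Set.Icc t₀ (t₀ + τ) := by
        rw [Set.uIoc_of_le hs.1] at hr
        exact ⟨hr.1.le, le_trans hr.2 hs.2⟩
      have heq : -(∑ k, w k r • gradient (L k) (θ r)) + ∑ k, w k r • gradient (L k) (θ t₀)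
          = ∑ k, w k r • (gradient (L k) (θ t₀) - gradient (L k) (θ r)) := by
        rw [neg_add_eq_sub, ← Finset.sum_sub_distrib]
        exact Finset.sum_congr rfl fun k _ => (smul_sub _ _ _).symm
      rw [heq]
      calc ‖∑ k, w k r • (gradient (L k) (θ t₀) - gradient (L k) (θ r))‖
          ≤ ∑ k, ‖w k r • (gradient (L k) (θ t₀) - gradient (L k) (θ r))‖ := norm_sum_le _ _
      _ ≤ ∑ _k : Fin K, M * ε₂ := Finset.sum_le_sum (fun k _ => by
            rw [norm_smul, Real.norm_eq_abs, norm_sub_rev]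
            exact mul_le_mul (hwM k r) ((hP r hr' k).1) (norm_nonneg _) hM0.le)
      _ = (K : ℝ) * (M * ε₂) := by
            simp [Finset.sum_const, Finset.card_univ, nsmul_eq_mul]
    refine le_trans (intervalIntegral.norm_integral_le_of_norm_le_const hb1) ?_
    exact mul_le_mul_of_nonneg_left (habs s hs) (by positivity)
  -- integrability facts for the identity
  have hIo : IntervalIntegrable (fun s => -(∑ k, w k s • gradient (L k) (θ s)))
      volume t₀ (t₀ + τ) := hIIG _ hbI
  have hIsum1 : IntervalIntegrable (fun s => ∑ k, w k s • gradient (L k) (θ t₀))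
      volume t₀ (t₀ + τ) :=
    intervalIntegrable_sum' _ fun k _ => (hIIw k t₀ (t₀ + τ)).smul_const' _
  have hprodInt : ∀ k₁ k₂ : Fin K, IntervalIntegrable
      (fun s => (w k₁ s * ∫ r in t₀..s, w k₂ r) • (H k₁) (gradient (L k₂) (θ t₀)))
      volume t₀ (t₀ + τ) := fun k₁ k₂ =>
    ((hIIw k₁ t₀ (t₀ + τ)).mul_continuousOn
      ((intervalIntegral.continuous_primitive (fun a b => hIIw k₂ a b) t₀).continuousOn)).smul_const' _
  have hIsum2 : IntervalIntegrable
      (fun s => ∑ k₁, ∑ k₂, (w k₁ s * ∫ r in t₀..s, w k₂ r) • (H k₁) (gradient (L k₂) (θ t₀)))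
      volume t₀ (t₀ + τ) :=
    intervalIntegrable_sum' _ fun k₁ _ => intervalIntegrable_sum' _ fun k₂ _ => hprodInt k₁ k₂
  -- double-integral rewrite
  have e2 : ∑ k₁, ∑ k₂, (∫ s in t₀..(t₀ + τ), ∫ r in t₀..s, w k₁ s * w k₂ r) •
        (H k₁) (gradient (L k₂) (θ t₀))
      = ∫ s in t₀..(t₀ + τ), ∑ k₁, ∑ k₂,
        (w k₁ s * ∫ r in t₀..s, w k₂ r) • (H k₁) (gradient (L k₂) (θ t₀)) := by
    rw [intervalIntegral.integral_finset_sum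
      (fun k₁ _ => intervalIntegrable_sum' _ (fun k₂ _ => hprodInt k₁ k₂))]
    refine Finset.sum_congr rfl fun k₁ _ => ?_
    rw [intervalIntegral.integral_finset_sum (fun k₂ _ => hprodInt k₁ k₂)]
    refine Finset.sum_congr rfl fun k₂ _ => ?_
    rw [← intervalIntegral.integral_smul_const]
    refine intervalIntegral.integral_congr fun s _ => ?_
    rw [intervalIntegral.integral_const_mul]
  -- the key identity
  have hFeq : θ (t₀ + τ) - θ t₀
        + ∑ k, (∫ s in t₀..(t₀ + τ), w k s) • gradient (L k) (θ t₀)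
        - ∑ k₁, ∑ k₂, (∫ s in t₀..(t₀ + τ), ∫ r in t₀..s, w k₁ s * w k₂ r) •
            (H k₁) (gradient (L k₂) (θ t₀))
      = ∫ s in t₀..(t₀ + τ), -(∑ k, w k s • (gradient (L k) (θ s) - gradient (L k) (θ t₀)
          + (H k) (∑ k₂, (∫ r in t₀..s, w k₂ r) • gradient (L k₂) (θ t₀)))) := by
    rw [key (t₀ + τ) hbI, hVeq (t₀ + τ), e2,
      ← intervalIntegral.integral_add hIo hIsum1,
      ← intervalIntegral.integral_sub (hIo.add hIsum1) hIsum2]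
    refine intervalIntegral.integral_congr fun s _ => ?_
    have hmap : ∀ k : Fin K, (H k) (∑ k₂, (∫ r in t₀..s, w k₂ r) • gradient (L k₂) (θ t₀))
        = ∑ k₂, (∫ r in t₀..s, w k₂ r) • (H k) (gradient (L k₂) (θ t₀)) := fun k => by
      rw [map_sum]
      exact Finset.sum_congr rfl fun k₂ _ => (H k).map_smul _ _
    simp only [hmap, smul_add, smul_sub, Finset.smul_sum, smul_smul,
      Finset.sum_add_distrib, Finset.sum_sub_distrib, neg_add, neg_sub]
    abel
  rw [hFeq]
  -- pointwise bound on the integrand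
  have hΦbd : ∀ s ∈ Set.uIoc t₀ (t₀ + τ),
      ‖-(∑ k, w k s • (gradient (L k) (θ s) - gradient (L k) (θ t₀)
          + (H k) (∑ k₂, (∫ r in t₀..s, w k₂ r) • gradient (L k₂) (θ t₀))))‖
        ≤ (K : ℝ) * (M * (ε₁ * (C₁ * τ) + HB * ((K : ℝ) * (M * ε₂) * τ))) := by
    intro s hsΙ
    have hs : s ∈ Set.Icc t₀ (t₀ + τ) := by
      rw [Set.uIoc_of_le hττ] at hsΙ
      exact ⟨hsΙ.1.le, hsΙ.2⟩
    rw [norm_neg]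
    calc ‖∑ k, w k s • (gradient (L k) (θ s) - gradient (L k) (θ t₀)
            + (H k) (∑ k₂, (∫ r in t₀..s, w k₂ r) • gradient (L k₂) (θ t₀)))‖
        ≤ ∑ k, ‖w k s • (gradient (L k) (θ s) - gradient (L k) (θ t₀)
            + (H k) (∑ k₂, (∫ r in t₀..s, w k₂ r) • gradient (L k₂) (θ t₀)))‖ :=
          norm_sum_le _ _
    _ ≤ ∑ _k : Fin K, M * (ε₁ * (C₁ * τ) + HB * ((K : ℝ) * (M * ε₂) * τ)) := by
          refine Finset.sum_le_sum fun k _ => ?_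
          rw [norm_smul, Real.norm_eq_abs]
          refine mul_le_mul (hwM k s) ?_ (norm_nonneg _) hM0.le
          have hsplit : gradient (L k) (θ s) - gradient (L k) (θ t₀)
              + (H k) (∑ k₂, (∫ r in t₀..s, w k₂ r) • gradient (L k₂) (θ t₀))
            = (gradient (L k) (θ s) - gradient (L k) (θ t₀) - (H k) (θ s - θ t₀))
              + (H k) (θ s - θ t₀
                + ∑ k₂, (∫ r in t₀..s, w k₂ r) • gradient (L k₂) (θ t₀)) := by
            rw [map_add]; abel
          rw [hsplit]
          refine le_trans (norm_add_le _ _) ?_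
          have h1 : ‖gradient (L k) (θ s) - gradient (L k) (θ t₀) - (H k) (θ s - θ t₀)‖
              ≤ ε₁ * (C₁ * τ) :=
            le_trans ((hP s hs k).2)
              (mul_le_mul_of_nonneg_left (hθdist s hs) hε₁0.le)
          have h2 : ‖(H k) (θ s - θ t₀
              + ∑ k₂, (∫ r in t₀..s, w k₂ r) • gradient (L k₂) (θ t₀))‖
              ≤ HB * ((K : ℝ) * (M * ε₂) * τ) :=
            le_trans ((H k).le_opNorm _)
              (mul_le_mul (hHBk k) (hE s hs) (norm_nonneg _) hHB0.le)
          linarith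
    _ = (K : ℝ) * (M * (ε₁ * (C₁ * τ) + HB * ((K : ℝ) * (M * ε₂) * τ))) := by
          simp [Finset.sum_const, Finset.card_univ, nsmul_eq_mul]
  refine le_trans (intervalIntegral.norm_integral_le_of_norm_le_const hΦbd) ?_
  have habs2 : |t₀ + τ - t₀| = τ := by
    rw [add_sub_cancel_left]; exact abs_of_pos hτ0
  rw [habs2, Real.norm_eq_abs, abs_of_nonneg (pow_nonneg hτ0.le 2)]
  -- numeric conclusion
  have hKMC : (0 : ℝ) ≤ (K : ℝ) * M * C₁ :=
    mul_nonneg (mul_nonneg (Nat.cast_nonneg K) hM0.le) hC₁0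
  have hKMH : (0 : ℝ) ≤ (K : ℝ) * M * HB * ((K : ℝ) * M) :=
    mul_nonneg (mul_nonneg (mul_nonneg (Nat.cast_nonneg K) hM0.le) hHB0.le)
      (mul_nonneg (Nat.cast_nonneg K) hM0.le)
  have hd1 : (0 : ℝ) < 2 * ((K : ℝ) * M * C₁ + 1) := by linarith
  have hd2 : (0 : ℝ) < 2 * ((K : ℝ) * M * HB * ((K : ℝ) * M) + 1) := by linarith
  have key1 : (K : ℝ) * M * C₁ * ε₁ ≤ ε / 2 := by
    have hq : (K : ℝ) * M * C₁ / (2 * ((K : ℝ) * M * C₁ + 1)) ≤ 1 / 2 := by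
      rw [div_le_div_iff₀ hd1 two_pos]
      nlinarith [hKMC]
    have : (K : ℝ) * M * C₁ * ε₁ = ε * ((K : ℝ) * M * C₁ / (2 * ((K : ℝ) * M * C₁ + 1))) := by
      rw [hε₁def]; ring
    rw [this]
    calc ε * ((K : ℝ) * M * C₁ / (2 * ((K : ℝ) * M * C₁ + 1))) ≤ ε * (1 / 2) :=
          mul_le_mul_of_nonneg_left hq hε.le
    _ = ε / 2 := by ring
  have key2 : (K : ℝ) * M * HB * ((K : ℝ) * M) * ε₂ ≤ ε / 2 := by
    have hq : (K : ℝ) * M * HB * ((K : ℝ) * M) / (2 * ((K : ℝ) * M * HB * ((K : ℝ) * M) + 1))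
        ≤ 1 / 2 := by
      rw [div_le_div_iff₀ hd2 two_pos]
      nlinarith [hKMH]
    have : (K : ℝ) * M * HB * ((K : ℝ) * M) * ε₂
        = ε * ((K : ℝ) * M * HB * ((K : ℝ) * M) / (2 * ((K : ℝ) * M * HB * ((K : ℝ) * M) + 1))) := by
      rw [hε₂def]; ring
    rw [this]
    calc ε * ((K : ℝ) * M * HB * ((K : ℝ) * M) / (2 * ((K : ℝ) * M * HB * ((K : ℝ) * M) + 1)))
        ≤ ε * (1 / 2) := mul_le_mul_of_nonneg_left hq hε.le
    _ = ε / 2 := by ring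
  calc (K : ℝ) * (M * (ε₁ * (C₁ * τ) + HB * ((K : ℝ) * (M * ε₂) * τ))) * τ
      = ((K : ℝ) * M * C₁ * ε₁ + (K : ℝ) * M * HB * ((K : ℝ) * M) * ε₂) * τ ^ 2 := by ring
  _ ≤ ε * τ ^ 2 := mul_le_mul_of_nonneg_right (by linarith) (pow_nonneg hτ0.le 2)
end

section
/- Let A₁, A₂ be n×n real matrices and b₁, b₂ ∈ ℝⁿ, let Φₐ(t, θ) = bₐ + exp(tAₐ)·(θ − bₐ) for a = 1, 2, and fix θ ∈ ℝⁿ. Define D : ℝ × ℝ → ℝⁿ by D(t₁, t₂) = Φ₁(t₁, Φ₂(t₂, θ)) − Φ₂(t₂, Φ₁(t₁, θ)). Then the mixed second partial derivative of D at (0,0) equals ∂²D/∂t₁∂t₂(0,0) = (A₁A₂ − A₂A₁)·θ − A₁A₂·b₂ + A₂A₁·b₁. -/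
/-- The flow of the affine vector field `v(θ) = A(θ − b)`
(the gradient field of the quadratic loss `½(θ−b)ᵀA(θ−b)`). -/
noncomputable def affineFlow {n : ℕ} (A : Matrix (Fin n) (Fin n) ℝ)
    (b : Fin n → ℝ) (t : ℝ) (θ : Fin n → ℝ) : Fin n → ℝ :=
  b + (NormedSpace.exp (t • A)).mulVec (θ - b)

open NormedSpace

attribute [local instance] Matrix.linftyOpNormedRing Matrix.linftyOpNormedAlgebra

/-- The map `M ↦ M *ᵥ v` as a continuous linear map on matrices. -/
noncomputable def mulVecCLM {n : ℕ} (v : Fin n → ℝ) :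
    Matrix (Fin n) (Fin n) ℝ →L[ℝ] (Fin n → ℝ) :=
  LinearMap.toContinuousLinearMap
    { toFun := fun M => M.mulVec v
      map_add' := fun M N => Matrix.add_mulVec M N v
      map_smul' := fun c M => Matrix.smul_mulVec c M v }

@[simp] lemma mulVecCLM_apply {n : ℕ} (v : Fin n → ℝ) (M : Matrix (Fin n) (Fin n) ℝ) :
    mulVecCLM v M = M.mulVec v := rfl

lemma hasDerivAt_expMulVec {n : ℕ} (A : Matrix (Fin n) (Fin n) ℝ)
    (v : Fin n → ℝ) (t : ℝ) :
    HasDerivAt (fun s : ℝ => (exp (s • A)).mulVec v)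
      ((exp (t • A) * A).mulVec v) t := by
  have h1 : HasDerivAt (fun s : ℝ => exp (s • A)) (exp (t • A) * A) t :=
    hasDerivAt_exp_smul_const A t
  exact (mulVecCLM v).hasFDerivAt.comp_hasDerivAt t h1

lemma hasDerivAt_affineFlow {n : ℕ} (A : Matrix (Fin n) (Fin n) ℝ)
    (b : Fin n → ℝ) (θ : Fin n → ℝ) (t : ℝ) :
    HasDerivAt (fun s : ℝ => affineFlow A b s θ)
      ((exp (t • A) * A).mulVec (θ - b)) t := by
  simpa [affineFlow] using (hasDerivAt_expMulVec A (θ - b) t).const_add b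

lemma hasDerivAt_affine_comp {n : ℕ} (M : Matrix (Fin n) (Fin n) ℝ) (b : Fin n → ℝ)
    {f : ℝ → Fin n → ℝ} {f' : Fin n → ℝ} {t : ℝ} (hf : HasDerivAt f f' t) :
    HasDerivAt (fun s => b + M.mulVec (f s - b)) (M.mulVec f') t := by
  have := (Matrix.mulVecLin M).toContinuousLinearMap.hasFDerivAt.comp_hasDerivAt t
    (hf.sub_const b)
  simpa using this.const_add b

/-- The infinitesimal commutator of the two affine (quadratic-loss gradient)
flows: with `D(t₁, t₂) = Φ₁(t₁, Φ₂(t₂, θ)) − Φ₂(t₂, Φ₁(t₁, θ))`, the mixed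
second partial derivative of `D` at `(0, 0)` equals
`(A₁A₂ − A₂A₁)θ − A₁A₂b₂ + A₂A₁b₁`. -/
theorem affineFlow_mixed_partial_commutator {n : ℕ}
    (A₁ A₂ : Matrix (Fin n) (Fin n) ℝ) (b₁ b₂ : Fin n → ℝ) (θ : Fin n → ℝ)
    (D : ℝ → ℝ → Fin n → ℝ)
    (hD : ∀ t₁ t₂ : ℝ, D t₁ t₂ =
      affineFlow A₁ b₁ t₁ (affineFlow A₂ b₂ t₂ θ)
        - affineFlow A₂ b₂ t₂ (affineFlow A₁ b₁ t₁ θ)) :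
    deriv (fun t₁ : ℝ => deriv (fun t₂ : ℝ => D t₁ t₂) 0) 0 =
      (A₁ * A₂ - A₂ * A₁).mulVec θ - (A₁ * A₂).mulVec b₂ + (A₂ * A₁).mulVec b₁ := by
  have hinner : ∀ t₁ : ℝ, deriv (fun t₂ : ℝ => D t₁ t₂) 0 =
      (exp (t₁ • A₁)).mulVec (A₂.mulVec (θ - b₂))
        - A₂.mulVec (affineFlow A₁ b₁ t₁ θ - b₂) := by
    intro t₁
    have h2 : HasDerivAt (fun t₂ : ℝ => affineFlow A₂ b₂ t₂ θ) (A₂.mulVec (θ - b₂)) 0 := by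
      simpa using hasDerivAt_affineFlow A₂ b₂ θ 0
    have hL : HasDerivAt (fun t₂ : ℝ => affineFlow A₁ b₁ t₁ (affineFlow A₂ b₂ t₂ θ))
        ((exp (t₁ • A₁)).mulVec (A₂.mulVec (θ - b₂))) 0 := by
      simpa [affineFlow] using hasDerivAt_affine_comp (exp (t₁ • A₁)) b₁ h2
    have hR : HasDerivAt (fun t₂ : ℝ => affineFlow A₂ b₂ t₂ (affineFlow A₁ b₁ t₁ θ))
        (A₂.mulVec (affineFlow A₁ b₁ t₁ θ - b₂)) 0 := by
      simpa using hasDerivAt_affineFlow A₂ b₂ (affineFlow A₁ b₁ t₁ θ) 0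
    have hfun : (fun t₂ : ℝ => D t₁ t₂) =
        fun t₂ : ℝ => affineFlow A₁ b₁ t₁ (affineFlow A₂ b₂ t₂ θ)
          - affineFlow A₂ b₂ t₂ (affineFlow A₁ b₁ t₁ θ) := funext (hD t₁)
    rw [hfun]
    exact (hL.sub hR).deriv
  have houter : (fun t₁ : ℝ => deriv (fun t₂ : ℝ => D t₁ t₂) 0) =
      fun t₁ : ℝ => (exp (t₁ • A₁)).mulVec (A₂.mulVec (θ - b₂))
        - A₂.mulVec (affineFlow A₁ b₁ t₁ θ - b₂) := funext hinner
  rw [houter]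
  have hL : HasDerivAt (fun t₁ : ℝ => (exp (t₁ • A₁)).mulVec (A₂.mulVec (θ - b₂)))
      (A₁.mulVec (A₂.mulVec (θ - b₂))) 0 := by
    simpa using hasDerivAt_expMulVec A₁ (A₂.mulVec (θ - b₂)) 0
  have hR : HasDerivAt (fun t₁ : ℝ => A₂.mulVec (affineFlow A₁ b₁ t₁ θ - b₂))
      (A₂.mulVec (A₁.mulVec (θ - b₁))) 0 := by
    have h1 : HasDerivAt (fun t₁ : ℝ => affineFlow A₁ b₁ t₁ θ) (A₁.mulVec (θ - b₁)) 0 := by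
      simpa using hasDerivAt_affineFlow A₁ b₁ θ 0
    simpa [Function.comp_def] using (Matrix.mulVecLin A₂).toContinuousLinearMap.hasFDerivAt.comp_hasDerivAt 0
      (h1.sub_const b₂)
  erw [(hL.sub hR).deriv]
  simp only [Matrix.mulVec_mulVec, Matrix.mulVec_sub, Matrix.sub_mulVec]
  abel
end
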